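/- arXiv:2502.06363 — 6 statements merged into one kernel-verified Lean document; each statement's English description precedes it below -/
import Mathlib

section
/- (Monotonicity of the posterior variance in the noise parameters.) Let X_t = (x_1,…,x_t) be a tuple of points of 𝒳 and let Σ = diag(λ_1²,…,λ_t²) and Σ' = diag(λ'_1²,…,λ'_t²) be diagonal matrices with 0 ≤ λ_i ≤ λ'_i and λ'_i > 0 for all i ∈ [t], such that K(X_t,X_t)+Σ is invertible. Then for every x ∈ 𝒳, σ²_Σ(x; X_t) ≤ σ²_{Σ'}(x; X_t). -/
open Matrix Real Finset

noncomputable section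

universe u

/-- Gram (kernel) matrix of a finite tuple of points. -/
def gramMat {𝒳 : Type u} (k : 𝒳 → 𝒳 → ℝ) {m : ℕ} (X : Fin m → 𝒳) :
    Matrix (Fin m) (Fin m) ℝ :=
  Matrix.of fun i j => k (X i) (X j)

/-- Kernel vector `k(x, X)`. -/
def kVec {𝒳 : Type u} (k : 𝒳 → 𝒳 → ℝ) {m : ℕ} (X : Fin m → 𝒳) (x : 𝒳) : Fin m → ℝ :=
  fun i => k x (X i)

/-- Posterior variance `σ²_Σ(x; X)`. -/
def postVar {𝒳 : Type u} (k : 𝒳 → 𝒳 → ℝ) {m : ℕ} (S : Matrix (Fin m) (Fin m) ℝ)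
    (X : Fin m → 𝒳) (x : 𝒳) : ℝ :=
  k x x - kVec k X x ⬝ᵥ ((gramMat k X + S)⁻¹ *ᵥ kVec k X x)

/-- Posterior standard deviation `σ_Σ(x; X)`. -/
def postStd {𝒳 : Type u} (k : 𝒳 → 𝒳 → ℝ) {m : ℕ} (S : Matrix (Fin m) (Fin m) ℝ)
    (X : Fin m → 𝒳) (x : 𝒳) : ℝ :=
  Real.sqrt (postVar k S X x)

/-- Posterior mean `μ_Σ(x; X, y)`. -/
def postMean {𝒳 : Type u} (k : 𝒳 → 𝒳 → ℝ) {m : ℕ} (S : Matrix (Fin m) (Fin m) ℝ)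
    (X : Fin m → 𝒳) (y : Fin m → ℝ) (x : 𝒳) : ℝ :=
  kVec k X x ⬝ᵥ ((gramMat k X + S)⁻¹ *ᵥ y)

/-- Information gain `I_Σ(Z)`. -/
def infoGain {𝒳 : Type u} (k : 𝒳 → 𝒳 → ℝ) {m : ℕ} (S : Matrix (Fin m) (Fin m) ℝ)
    (Z : Fin m → 𝒳) : ℝ :=
  (1 / 2) * Real.log ((S + gramMat k Z).det / S.det)

/-- `k` is a symmetric positive semidefinite kernel. -/
def IsKernel {𝒳 : Type u} (k : 𝒳 → 𝒳 → ℝ) : Prop :=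
  (∀ x y, k x y = k y x) ∧ ∀ (m : ℕ) (Z : Fin m → 𝒳), (gramMat k Z).PosSemidef

/-- Prefix of length `t` of a sequence of points. -/
def preT {𝒳 : Type u} (x : ℕ → 𝒳) (t : ℕ) : Fin t → 𝒳 := fun i => x i.val


private lemma symm_dot {n : ℕ} {M : Matrix (Fin n) (Fin n) ℝ} (hM : M.IsHermitian)
    (x y : Fin n → ℝ) : x ⬝ᵥ (M *ᵥ y) = y ⬝ᵥ (M *ᵥ x) := by
  rw [Matrix.dotProduct_mulVec, ← Matrix.mulVec_transpose]
  rw [show Mᵀ = M from (by simpa using hM : M.IsSymm)]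
  exact dotProduct_comm _ _

private lemma inv_quad_anti {n : ℕ} {A B : Matrix (Fin n) (Fin n) ℝ}
    (hA : A.PosSemidef) (hdet : A.det ≠ 0) (hB : B.PosDef)
    (hD : (B - A).PosSemidef) (v : Fin n → ℝ) :
    v ⬝ᵥ (B⁻¹ *ᵥ v) ≤ v ⬝ᵥ (A⁻¹ *ᵥ v) := by
  set D := B - A with hDdef
  set u := A⁻¹ *ᵥ v with hu
  set w := B⁻¹ *ᵥ v with hw
  have hAu : A *ᵥ u = v := by
    rw [hu, Matrix.mulVec_mulVec, Matrix.mul_nonsing_inv _ (isUnit_iff_ne_zero.2 hdet),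
      Matrix.one_mulVec]
  have hBdet : B.det ≠ 0 := ne_of_gt hB.det_pos
  have hBw : B *ᵥ w = v := by
    rw [hw, Matrix.mulVec_mulVec, Matrix.mul_nonsing_inv _ (isUnit_iff_ne_zero.2 hBdet),
      Matrix.one_mulVec]
  set p := u - w with hp
  have hAp : A *ᵥ p = D *ᵥ w := by
    rw [hp, Matrix.mulVec_sub, hAu, hDdef, Matrix.sub_mulVec, hBw]
  have hApn : 0 ≤ p ⬝ᵥ (A *ᵥ p) := by simpa using hA.dotProduct_mulVec_nonneg p
  have hDwn : 0 ≤ w ⬝ᵥ (D *ᵥ w) := by simpa using hD.dotProduct_mulVec_nonneg w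
  have hup : u = w + p := by rw [hp]; abel
  have key : v ⬝ᵥ u - v ⬝ᵥ w = p ⬝ᵥ (A *ᵥ p) + w ⬝ᵥ (D *ᵥ w) := by
    have h1 : v ⬝ᵥ u = u ⬝ᵥ (A *ᵥ u) := by rw [← hAu, dotProduct_comm]
    have h2 : v ⬝ᵥ w = w ⬝ᵥ (B *ᵥ w) := by rw [← hBw, dotProduct_comm]
    have hBAD : B = A + D := by rw [hDdef]; abel
    have hwAp : w ⬝ᵥ (A *ᵥ p) = w ⬝ᵥ (D *ᵥ w) := by rw [hAp]
    have hpAw : p ⬝ᵥ (A *ᵥ w) = w ⬝ᵥ (D *ᵥ w) := by rw [symm_dot hA.1, hAp]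
    rw [h1, h2, hup, hBAD]
    simp only [Matrix.mulVec_add, Matrix.add_mulVec, dotProduct_add,
      add_dotProduct]
    rw [hwAp, hpAw]; ring
  have : 0 ≤ v ⬝ᵥ u - v ⬝ᵥ w := key ▸ add_nonneg hApn hDwn
  linarith

/-- monotonicity of the posterior variance in the noise parameters. -/
theorem postVar_mono_noise
    {𝒳 : Type u} (k : 𝒳 → 𝒳 → ℝ) (hk : IsKernel k)
    (t : ℕ) (X : Fin t → 𝒳) (lam lam' : Fin t → ℝ)
    (h0 : ∀ i, 0 ≤ lam i) (hle : ∀ i, lam i ≤ lam' i) (hpos : ∀ i, 0 < lam' i)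
    (hinv : (gramMat k X + Matrix.diagonal fun i => lam i ^ 2).det ≠ 0) :
    ∀ x : 𝒳,
      postVar k (Matrix.diagonal fun i => lam i ^ 2) X x
        ≤ postVar k (Matrix.diagonal fun i => lam' i ^ 2) X x := by
  intro x
  set G := gramMat k X with hG
  have hGps : G.PosSemidef := hk.2 t X
  have hSps : (Matrix.diagonal fun i => lam i ^ 2).PosSemidef :=
    Matrix.PosSemidef.diagonal fun i => sq_nonneg _
  have hS'pd : (Matrix.diagonal fun i => lam' i ^ 2).PosDef :=
    Matrix.PosDef.diagonal fun i => pow_pos (hpos i) 2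
  have hA : (G + Matrix.diagonal fun i => lam i ^ 2).PosSemidef := hGps.add hSps
  have hB : (G + Matrix.diagonal fun i => lam' i ^ 2).PosDef :=
    Matrix.PosDef.posSemidef_add hGps hS'pd
  have hD : ((G + Matrix.diagonal fun i => lam' i ^ 2)
      - (G + Matrix.diagonal fun i => lam i ^ 2)).PosSemidef := by
    have heq : (G + Matrix.diagonal fun i => lam' i ^ 2)
        - (G + Matrix.diagonal fun i => lam i ^ 2)
        = Matrix.diagonal fun i => lam' i ^ 2 - lam i ^ 2 := by
      rw [add_sub_add_left_eq_sub, Matrix.diagonal_sub]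
    rw [heq]
    exact Matrix.PosSemidef.diagonal fun i =>
      sub_nonneg.2 (pow_le_pow_left₀ (h0 i) (hle i) 2)
  have := inv_quad_anti hA hinv hB hD (kVec k X x)
  unfold postVar
  linarith
end
end

section
/- (Chain rule for the information gain.) For every T-tuple X_T = (x_1,…,x_T) of points of 𝒳 and every positive diagonal matrix Σ_T = diag(λ_1²,…,λ_T²) with λ_t > 0 for all t: (1/2)·ln( det(Σ_T + K(X_T,X_T)) / det(Σ_T) ) = Σ_{t=1}^T (1/2)·ln( 1 + λ_t^{−2}·σ²_{Σ_{t−1}}(x_t; X_{t−1}) ), where X_{t−1} := (x_1,…,x_{t−1}) and Σ_{t−1} := diag(λ_1²,…,λ_{t−1}²). -/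
open Matrix Real Finset

noncomputable section

universe u

set_option maxHeartbeats 1000000 in
lemma detStep {𝒳 : Type u} (k : 𝒳 → 𝒳 → ℝ) (hk : IsKernel k)
    (t : ℕ) (xs : ℕ → 𝒳) (lam : ℕ → ℝ) (hpos : ∀ s < t, 0 < lam s) :
    ((Matrix.diagonal fun i : Fin (t+1) => lam i.val ^ 2) + gramMat k (preT xs (t+1))).det
      = ((Matrix.diagonal fun i : Fin t => lam i.val ^ 2) + gramMat k (preT xs t)).det
        * (lam t ^ 2 + postVar k (Matrix.diagonal fun i : Fin t => lam i.val ^ 2)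
            (preT xs t) (xs t)) := by
  obtain ⟨S, hS⟩ : ∃ S : Matrix (Fin t) (Fin t) ℝ,
      S = Matrix.diagonal fun i : Fin t => lam i.val ^ 2 := ⟨_, rfl⟩
  obtain ⟨A, hA⟩ : ∃ A : Matrix (Fin t) (Fin t) ℝ, A = S + gramMat k (preT xs t) := ⟨_, rfl⟩
  have hApd : A.PosDef := by
    rw [hA, hS]
    exact (Matrix.PosDef.diagonal (fun i => pow_pos (hpos i.val i.isLt) 2)).add_posSemidef
      (hk.2 t (preT xs t))
  haveI : Invertible A := A.invertibleOfIsUnitDet hApd.det_pos.ne'.isUnit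
  obtain ⟨B, hB⟩ : ∃ B : Matrix (Fin t) (Fin 1) ℝ,
      B = Matrix.of fun i _ => k (xs i.val) (xs t) := ⟨_, rfl⟩
  obtain ⟨C, hC⟩ : ∃ C : Matrix (Fin 1) (Fin t) ℝ,
      C = Matrix.of fun _ j => k (xs t) (xs j.val) := ⟨_, rfl⟩
  obtain ⟨D, hD⟩ : ∃ D : Matrix (Fin 1) (Fin 1) ℝ,
      D = Matrix.of fun _ _ => lam t ^ 2 + k (xs t) (xs t) := ⟨_, rfl⟩
  have hsub : ((Matrix.diagonal fun i : Fin (t+1) => lam i.val ^ 2)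
      + gramMat k (preT xs (t+1))).submatrix finSumFinEquiv finSumFinEquiv
      = Matrix.fromBlocks A B C D := by
    ext i j
    cases i with
    | inl i =>
      cases j with
      | inl j =>
        simp only [Matrix.submatrix_apply, finSumFinEquiv_apply_left, Matrix.fromBlocks_apply₁₁,
          hA, hS, Matrix.add_apply, gramMat, Matrix.of_apply, preT, Matrix.diagonal_apply]
        congr 1
        · by_cases h : i = j
          · subst h; simp
          · rw [if_neg, if_neg h]
            simpa [Fin.ext_iff] using fun hh => h (Fin.ext hh)
      | inr j =>
        have : (finSumFinEquiv (Sum.inr j) : Fin (t+1)).val = t := by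
          simp [finSumFinEquiv_apply_right, Fin.ext_iff, Fin.eq_zero j]
        simp only [Matrix.submatrix_apply, finSumFinEquiv_apply_left, Matrix.fromBlocks_apply₁₂,
          Matrix.add_apply, gramMat, Matrix.of_apply, preT, hB, this]
        have hne : Fin.castAdd 1 i ≠ finSumFinEquiv (Sum.inr j) := by
          intro h
          have h2 := congrArg Fin.val h
          rw [this] at h2
          simp at h2
          have := i.isLt
          omega
        rw [Matrix.diagonal_apply_ne _ hne, zero_add]
        simp
    | inr i =>
      cases j with
      | inl j =>
        have : (finSumFinEquiv (Sum.inr i) : Fin (t+1)).val = t := by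
          simp [finSumFinEquiv_apply_right, Fin.ext_iff, Fin.eq_zero i]
        simp only [Matrix.submatrix_apply, finSumFinEquiv_apply_left, Matrix.fromBlocks_apply₂₁,
          Matrix.add_apply, gramMat, Matrix.of_apply, preT, hC, this]
        have hne : finSumFinEquiv (Sum.inr i) ≠ Fin.castAdd 1 j := by
          intro h
          have h2 := congrArg Fin.val h
          rw [this] at h2
          simp at h2
          have := j.isLt
          omega
        rw [Matrix.diagonal_apply_ne _ hne, zero_add]
        simp
      | inr j =>
        have hi : (finSumFinEquiv (Sum.inr i) : Fin (t+1)).val = t := by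
          simp [finSumFinEquiv_apply_right, Fin.ext_iff, Fin.eq_zero i]
        have hj : (finSumFinEquiv (Sum.inr j) : Fin (t+1)).val = t := by
          simp [finSumFinEquiv_apply_right, Fin.ext_iff, Fin.eq_zero j]
        simp only [Matrix.submatrix_apply, Matrix.fromBlocks_apply₂₂,
          Matrix.add_apply, gramMat, Matrix.of_apply, preT, Matrix.diagonal_apply, hD, hi, hj]
        rw [if_pos (Fin.ext (by rw [hi, hj]))]
  have hdet := Matrix.det_submatrix_equiv_self finSumFinEquiv
    ((Matrix.diagonal fun i : Fin (t+1) => lam i.val ^ 2) + gramMat k (preT xs (t+1)))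
  rw [hsub] at hdet
  rw [← hS, ← hdet, Matrix.det_fromBlocks₁₁, ← hA]
  congr 1
  rw [Matrix.det_fin_one]
  have hinv : ⅟A = A⁻¹ := invOf_eq_nonsing_inv A
  have hcomm : gramMat k (preT xs t) + S = A := by rw [hA, add_comm]
  simp only [Matrix.sub_apply, Matrix.mul_apply, hD, Matrix.of_apply, postVar, hcomm, hinv]
  rw [add_sub_assoc]
  congr 1
  congr 1
  rw [dotProduct, Finset.sum_congr rfl]
  intro i _
  rw [Matrix.mulVec, dotProduct]
  simp only [kVec, hC, hB, Matrix.of_apply, preT]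
  rw [Finset.mul_sum, Finset.sum_mul]
  refine Finset.sum_congr rfl fun j _ => ?_
  have hsymm : A⁻¹ j i = A⁻¹ i j := by
    have := congrFun (congrFun hApd.isHermitian.inv.eq i) j
    simpa using this
  rw [hsymm, hk.1 (xs i.val) (xs t)]
  ring

/-- chain rule for the information gain. -/
theorem infoGain_chain_rule
    {𝒳 : Type u} (k : 𝒳 → 𝒳 → ℝ) (hk : IsKernel k)
    (T : ℕ) (xs : ℕ → 𝒳) (lam : ℕ → ℝ) (hpos : ∀ t < T, 0 < lam t) :
    infoGain k (Matrix.diagonal fun i : Fin T => lam i.val ^ 2) (preT xs T)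
      = ∑ t ∈ Finset.range T, (1 / 2) *
          Real.log (1 + (lam t ^ 2)⁻¹ *
            postVar k (Matrix.diagonal fun i : Fin t => lam i.val ^ 2) (preT xs t) (xs t)) := by
  induction T with
  | zero => simp [infoGain, Matrix.det_isEmpty]
  | succ T ih =>
    have hpos' : ∀ t < T, 0 < lam t := fun t ht => hpos t (ht.trans (Nat.lt_succ_self T))
    have hlamT : (0:ℝ) < lam T ^ 2 := pow_pos (hpos T (Nat.lt_succ_self T)) 2
    have hSTpd : (Matrix.diagonal fun i : Fin T => lam i.val ^ 2).PosDef :=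
      Matrix.PosDef.diagonal fun i => pow_pos (hpos' i.val i.isLt) 2
    have hMTpd : ((Matrix.diagonal fun i : Fin T => lam i.val ^ 2)
        + gramMat k (preT xs T)).PosDef :=
      hSTpd.add_posSemidef (hk.2 T (preT xs T))
    have hS1pd : (Matrix.diagonal fun i : Fin (T+1) => lam i.val ^ 2).PosDef :=
      Matrix.PosDef.diagonal fun i => pow_pos (hpos i.val i.isLt) 2
    have hM1pd : ((Matrix.diagonal fun i : Fin (T+1) => lam i.val ^ 2)
        + gramMat k (preT xs (T+1))).PosDef :=
      hS1pd.add_posSemidef (hk.2 (T+1) (preT xs (T+1)))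
    have hstep := detStep k hk T xs lam hpos'
    have hs_pos : 0 < lam T ^ 2 + postVar k (Matrix.diagonal fun i : Fin T => lam i.val ^ 2)
        (preT xs T) (xs T) := by
      have h1 := hM1pd.det_pos
      rw [hstep] at h1
      nlinarith [hMTpd.det_pos]
    rw [Finset.sum_range_succ, ← ih hpos']
    unfold infoGain
    rw [hstep]
    have hdSsucc : (Matrix.diagonal fun i : Fin (T+1) => lam i.val ^ 2).det
        = (Matrix.diagonal fun i : Fin T => lam i.val ^ 2).det * lam T ^ 2 := by
      simp [Matrix.det_diagonal, Fin.prod_univ_castSucc]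
    rw [hdSsucc, mul_div_mul_comm,
      Real.log_mul (div_ne_zero hMTpd.det_pos.ne' hSTpd.det_pos.ne')
        (div_ne_zero hs_pos.ne' hlamT.ne'), mul_add]
    congr 2
    field_simp
    rw [add_div, div_self hlamT.ne']
end
end

section
/- Let X_T = (x_1,…,x_T) be a tuple of points of 𝒳 and Σ = diag(λ_1²,…,λ_T²) with λ_t > 0 for all t; for x ∈ 𝒳 set Z_T(x) := (K(X_T,X_T)+Σ)⁻¹·k(x,X_T) ∈ ℝ^T. Then Z_T(x)ᵀ·Σ·Z_T(x) ≤ σ²_Σ(x; X_T); equivalently, k(x,X_T)ᵀ(K(X_T,X_T)+Σ)⁻¹Σ(K(X_T,X_T)+Σ)⁻¹k(x,X_T) ≤ k(x,x) − k(x,X_T)ᵀ(K(X_T,X_T)+Σ)⁻¹k(x,X_T). -/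
open Matrix Real Finset

noncomputable section

universe u

/-- the weighted quadratic form of `Z_T(x)` is bounded by the posterior
variance. -/
theorem weighted_quadratic_form_le_postVar
    {𝒳 : Type u} (k : 𝒳 → 𝒳 → ℝ) (hk : IsKernel k)
    (T : ℕ) (X : Fin T → 𝒳) (lam : Fin T → ℝ) (hpos : ∀ i, 0 < lam i) (x : 𝒳) :
    ((gramMat k X + Matrix.diagonal fun i => lam i ^ 2)⁻¹ *ᵥ kVec k X x)
        ⬝ᵥ (Matrix.diagonal (fun i => lam i ^ 2) *ᵥ
            ((gramMat k X + Matrix.diagonal fun i => lam i ^ 2)⁻¹ *ᵥ kVec k X x))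
      ≤ postVar k (Matrix.diagonal fun i => lam i ^ 2) X x := by
  obtain ⟨hsymm, hpsd⟩ := hk
  set Sm : Matrix (Fin T) (Fin T) ℝ := Matrix.diagonal fun i => lam i ^ 2 with hS
  set K := gramMat k X with hKdef
  set A := K + Sm with hA
  have hK := hpsd T X
  have hSpd : Sm.PosDef := Matrix.PosDef.diagonal fun i => pow_pos (hpos i) 2
  have hApd : A.PosDef := by
    refine Matrix.posDef_iff_dotProduct_mulVec.mpr ⟨hK.1.add hSpd.1, fun v hv => ?_⟩
    have h1 := hK.dotProduct_mulVec_nonneg v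
    have h2 := hSpd.dotProduct_mulVec_pos hv
    simpa [hA, Matrix.add_mulVec, dotProduct_add] using add_pos_of_nonneg_of_pos h1 h2
  have hAinv : A * A⁻¹ = 1 := A.mul_nonsing_inv hApd.det_pos.ne'.isUnit
  set v := kVec k X x with hv
  set z := A⁻¹ *ᵥ v with hz
  have hAz : A *ᵥ z = v := by rw [hz, Matrix.mulVec_mulVec, hAinv, Matrix.one_mulVec]
  set G := gramMat k (Fin.cons x X) with hG
  have hGpsd := hpsd (T + 1) (Fin.cons x X)
  set w : Fin (T + 1) → ℝ := Fin.cons 1 (-z) with hw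
  have key : 0 ≤ w ⬝ᵥ (G *ᵥ w) := by simpa using hGpsd.dotProduct_mulVec_nonneg w
  have expand : w ⬝ᵥ (G *ᵥ w) = k x x - 2 * (v ⬝ᵥ z) + z ⬝ᵥ (K *ᵥ z) := by
    simp only [hw, hG, dotProduct, Matrix.mulVec, Fin.sum_univ_succ, Fin.cons_zero,
      Fin.cons_succ, gramMat, Matrix.of_apply, hKdef, hv, kVec, Pi.neg_apply]
    simp only [hsymm x]
    simp only [mul_add, Finset.mul_sum, Finset.sum_add_distrib, neg_mul, mul_neg, neg_neg,
      Finset.sum_neg_distrib, two_mul]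
    ring_nf
    rw [show (∑ x_1, z x_1 * k (X x_1) x) = ∑ x_1, k (X x_1) x * z x_1 from
      Finset.sum_congr rfl fun i _ => mul_comm _ _]
    ring
  have hSz : z ⬝ᵥ (Sm *ᵥ z) = v ⬝ᵥ z - z ⬝ᵥ (K *ᵥ z) := by
    have hsub : Sm *ᵥ z = A *ᵥ z - K *ᵥ z := by
      rw [hA, Matrix.add_mulVec]; ring_nf
    rw [hsub, hAz, dotProduct_sub, dotProduct_comm z v]
  have hgoal : z ⬝ᵥ (Sm *ᵥ z) ≤ k x x - v ⬝ᵥ z := by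
    rw [hSz]
    have h0 : 0 ≤ k x x - 2 * (v ⬝ᵥ z) + z ⬝ᵥ (K *ᵥ z) := expand ▸ key
    linarith
  simpa [postVar, hz, hv, hS, hKdef, hA, dotProduct_comm] using hgoal
end
end

section
/- (Information-gain bound on accumulated posterior standard deviations.) Let x_1,…,x_T ∈ 𝒳, let λ_1,…,λ_T > 0, set Σ_t := diag(λ_1²,…,λ_t²) and X_t := (x_1,…,x_t), and let 𝒯 := {t ∈ [T] : σ_{Σ_{t−1}}(x_t; X_{t−1}) ≤ λ_t}. If γ ≥ I_{Σ_T}(X_T), then Σ_{t∈𝒯} σ_{Σ_{t−1}}(x_t; X_{t−1}) ≤ 2·√( (Σ_{t=1}^T λ_t²)·γ ). -/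
open Matrix Real Finset

noncomputable section

universe u

variable {𝒳 : Type u}

/-- the regularized kernel matrix at step t -/
def Amat (k : 𝒳 → 𝒳 → ℝ) (xs : ℕ → 𝒳) (lam : ℕ → ℝ) (t : ℕ) : Matrix (Fin t) (Fin t) ℝ :=
  gramMat k (preT xs t) + Matrix.diagonal (fun i : Fin t => lam i.val ^ 2)

lemma Amat_posDef (k : 𝒳 → 𝒳 → ℝ) (hk : IsKernel k) (xs : ℕ → 𝒳) (lam : ℕ → ℝ) (t : ℕ)
    (hpos : ∀ i < t, 0 < lam i) : (Amat k xs lam t).PosDef := by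
  have hd : (Matrix.diagonal (fun i : Fin t => lam i.val ^ 2)).PosDef :=
    Matrix.posDef_diagonal_iff.mpr fun i => pow_pos (hpos i.val i.isLt) 2
  exact Matrix.PosDef.posSemidef_add (hk.2 t (preT xs t)) hd

lemma submatrix_step (k : 𝒳 → 𝒳 → ℝ) (xs : ℕ → 𝒳) (lam : ℕ → ℝ) (t : ℕ) :
    (Amat k xs lam (t+1)).submatrix finSumFinEquiv finSumFinEquiv
      = Matrix.fromBlocks (Amat k xs lam t)
          (Matrix.of fun i (_ : Fin 1) => k (xs i.val) (xs t))
          (Matrix.of fun (_ : Fin 1) j => k (xs t) (xs j.val))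
          (Matrix.of fun _ _ => k (xs t) (xs t) + lam t ^ 2) := by
  ext i j
  rcases i with i | i <;> rcases j with j | j <;>
    simp [Amat, gramMat, preT, Matrix.diagonal_apply, Matrix.fromBlocks,
      finSumFinEquiv_apply_left, finSumFinEquiv_apply_right, Fin.ext_iff, Fin.castAdd,
      Fin.natAdd, Fin.castLE]
  · omega
  · omega

lemma rowmulcol' {t : ℕ} (M : Matrix (Fin t) (Fin t) ℝ) (v w : Fin t → ℝ) (a b : Fin 1) :
    (Matrix.of (fun (_ : Fin 1) i => v i) * M * Matrix.of (fun i (_ : Fin 1) => w i)) a b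
      = v ⬝ᵥ (M *ᵥ w) := by
  simp only [Matrix.mul_apply, Matrix.of_apply, dotProduct, Matrix.mulVec, Finset.sum_mul,
    Finset.mul_sum]
  rw [Finset.sum_comm]
  exact Finset.sum_congr rfl fun i _ => Finset.sum_congr rfl fun j _ => by ring

lemma det_step (k : 𝒳 → 𝒳 → ℝ) (hk : IsKernel k) (xs : ℕ → 𝒳) (lam : ℕ → ℝ) (t : ℕ)
    (hpos : ∀ i < t, 0 < lam i) :
    (Amat k xs lam (t+1)).det = (Amat k xs lam t).det *
      (lam t ^ 2 + postVar k (Matrix.diagonal fun i : Fin t => lam i.val ^ 2)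
        (preT xs t) (xs t)) := by
  have hA := Amat_posDef k hk xs lam t hpos
  haveI : Invertible (Amat k xs lam t) :=
    Matrix.invertibleOfIsUnitDet _ hA.det_pos.ne'.isUnit
  rw [← Matrix.det_submatrix_equiv_self finSumFinEquiv, submatrix_step,
    Matrix.det_fromBlocks₁₁]
  congr 1
  rw [Matrix.det_fin_one, invOf_eq_nonsing_inv]
  have hB : (Matrix.of fun i (_ : Fin 1) => k (xs i.val) (xs t))
      = Matrix.of fun i (_ : Fin 1) => kVec k (preT xs t) (xs t) i := by
    ext i j; exact hk.1 _ _
  rw [hB]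
  have := rowmulcol' ((Amat k xs lam t)⁻¹) (kVec k (preT xs t) (xs t))
    (kVec k (preT xs t) (xs t)) 0 0
  simp only [Matrix.sub_apply, Matrix.of_apply]
  rw [show (Matrix.of fun (_ : Fin 1) j => k (xs t) (xs (j : Fin t).val))
      = Matrix.of (fun (_ : Fin 1) i => kVec k (preT xs t) (xs t) i) from rfl, this]
  show k (xs t) (xs t) + lam t ^ 2 - _ = _
  rw [postVar]
  show _ = lam t ^ 2 + (k (xs t) (xs t)
    - kVec k (preT xs t) (xs t) ⬝ᵥ ((Amat k xs lam t)⁻¹ *ᵥ kVec k (preT xs t) (xs t)))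
  ring

lemma postVar_nonneg (k : 𝒳 → 𝒳 → ℝ) (hk : IsKernel k) (xs : ℕ → 𝒳) (lam : ℕ → ℝ) (t : ℕ)
    (hpos : ∀ i < t, 0 < lam i) :
    0 ≤ postVar k (Matrix.diagonal fun i : Fin t => lam i.val ^ 2) (preT xs t) (xs t) := by
  have hA := Amat_posDef k hk xs lam t hpos
  haveI : Invertible (Amat k xs lam t) :=
    Matrix.invertibleOfIsUnitDet _ hA.det_pos.ne'.isUnit
  set v : Fin t → ℝ := kVec k (preT xs t) (xs t) with hv
  set B : Matrix (Fin t) (Fin 1) ℝ := Matrix.of fun i (_ : Fin 1) => v i with hBdef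
  set D : Matrix (Fin 1) (Fin 1) ℝ := Matrix.of fun _ _ => k (xs t) (xs t) with hDdef
  have hBH : Bᴴ = Matrix.of (fun (_ : Fin 1) i => v i) := by
    ext i j; simp [hBdef, Matrix.conjTranspose_apply]
  have heq : Matrix.fromBlocks (Amat k xs lam t) B Bᴴ D
      = (gramMat k (preT xs (t+1))).submatrix finSumFinEquiv finSumFinEquiv
        + Matrix.fromBlocks (Matrix.diagonal fun i : Fin t => lam i.val ^ 2) 0 0
            (0 : Matrix (Fin 1) (Fin 1) ℝ) := by
    ext i j
    rcases i with i | i <;> rcases j with j | j <;>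
      simp [hBdef, hDdef, hv, kVec, Amat, gramMat, preT, Matrix.conjTranspose_apply,
        finSumFinEquiv_apply_left, finSumFinEquiv_apply_right, Fin.castAdd, Fin.natAdd,
        Fin.castLE, hk.1 (xs t)]
  have hPSD : (Matrix.fromBlocks (Amat k xs lam t) B Bᴴ D).PosSemidef := by
    rw [heq]
    refine Matrix.PosSemidef.add ?_ ?_
    · exact (Matrix.posSemidef_submatrix_equiv finSumFinEquiv).mpr (hk.2 _ _)
    · rw [show (0 : Matrix (Fin 1) (Fin 1) ℝ) = Matrix.diagonal (fun _ => (0:ℝ)) by simp,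
        Matrix.fromBlocks_diagonal]
      exact Matrix.posSemidef_diagonal_iff.mpr (by rintro (i | i) <;> simp [sq_nonneg])
  have hschur := (Matrix.PosDef.fromBlocks₁₁ B D hA).mp hPSD
  have hentry := hschur.dotProduct_mulVec_nonneg (fun _ => (1:ℝ))
  simp only [dotProduct, Matrix.mulVec, Fin.sum_univ_one, Pi.star_apply, star_one, one_mul,
    mul_one, Matrix.sub_apply] at hentry
  rw [hBH, rowmulcol' ((Amat k xs lam t)⁻¹) v v 0 0] at hentry
  simpa [postVar, hDdef, Amat] using hentry

lemma det_Amat (k : 𝒳 → 𝒳 → ℝ) (hk : IsKernel k) (xs : ℕ → 𝒳) (lam : ℕ → ℝ) (T : ℕ)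
    (hpos : ∀ i < T, 0 < lam i) :
    (Amat k xs lam T).det = ∏ t ∈ Finset.range T,
      (lam t ^ 2 + postVar k (Matrix.diagonal fun i : Fin t => lam i.val ^ 2)
        (preT xs t) (xs t)) := by
  induction T with
  | zero => simp [Amat, Matrix.det_fin_zero]
  | succ n ih =>
    rw [det_step k hk xs lam n (fun i hi => hpos i (by omega)),
      ih (fun i hi => hpos i (by omega)), Finset.prod_range_succ]



lemma key_log {u : ℝ} (h0 : 0 ≤ u) (h1 : u ≤ 1) : u ≤ 2 * Real.log (1 + u) := by
  have hE := Real.add_one_le_exp (-(u/2))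
  rw [Real.exp_neg] at hE
  have hEp := Real.exp_pos (u/2)
  have h2 : Real.exp (u/2) ≤ 1 + u := by
    have hmul : (-(u/2)+1) * Real.exp (u/2) ≤ 1 := by
      have := mul_le_mul_of_nonneg_right hE hEp.le
      rwa [inv_mul_cancel₀ hEp.ne'] at this
    nlinarith [hEp]
  have := (Real.le_log_iff_exp_le (by linarith : (0:ℝ) < 1 + u)).mpr h2
  linarith


open scoped Classical

/-- information-gain bound on accumulated posterior standard deviations. -/
theorem sum_postStd_le_sqrt_infoGain
    {𝒳 : Type u} (k : 𝒳 → 𝒳 → ℝ) (hk : IsKernel k)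
    (T : ℕ) (xs : ℕ → 𝒳) (lam : ℕ → ℝ) (hpos : ∀ t < T, 0 < lam t)
    (γ : ℝ)
    (hγ : infoGain k (Matrix.diagonal fun i : Fin T => lam i.val ^ 2) (preT xs T) ≤ γ) :
    ∑ t ∈ (Finset.range T).filter (fun t =>
        postStd k (Matrix.diagonal fun i : Fin t => lam i.val ^ 2) (preT xs t) (xs t) ≤ lam t),
        postStd k (Matrix.diagonal fun i : Fin t => lam i.val ^ 2) (preT xs t) (xs t)
      ≤ 2 * Real.sqrt ((∑ t ∈ Finset.range T, lam t ^ 2) * γ) := by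
  set σ2 : ℕ → ℝ := fun t =>
    postVar k (Matrix.diagonal fun i : Fin t => lam i.val ^ 2) (preT xs t) (xs t) with hσ2def
  set std : ℕ → ℝ := fun t =>
    postStd k (Matrix.diagonal fun i : Fin t => lam i.val ^ 2) (preT xs t) (xs t) with hstddef
  set u : ℕ → ℝ := fun t => σ2 t / lam t ^ 2 with hudef
  have hσ2nn : ∀ t < T, 0 ≤ σ2 t := fun t ht =>
    postVar_nonneg k hk xs lam t (fun i hi => hpos i (by omega))
  have hunn : ∀ t < T, 0 ≤ u t := fun t ht =>
    div_nonneg (hσ2nn t ht) (sq_nonneg _)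
  have hstd_sq : ∀ t < T, std t ^ 2 = σ2 t := fun t ht => Real.sq_sqrt (hσ2nn t ht)
  have hstd_nn : ∀ t, 0 ≤ std t := fun t => Real.sqrt_nonneg _
  -- info gain identity
  have hIG : infoGain k (Matrix.diagonal fun i : Fin T => lam i.val ^ 2) (preT xs T)
      = (1/2) * ∑ t ∈ Finset.range T, Real.log (1 + u t) := by
    rw [infoGain, add_comm]
    have h1 : (gramMat k (preT xs T) + Matrix.diagonal fun i : Fin T => lam i.val ^ 2).det
        = ∏ t ∈ Finset.range T, (lam t ^ 2 + σ2 t) :=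
      det_Amat k hk xs lam T hpos
    have h2 : (Matrix.diagonal fun i : Fin T => lam i.val ^ 2).det
        = ∏ t ∈ Finset.range T, lam t ^ 2 := by
      rw [Matrix.det_diagonal]
      exact Fin.prod_univ_eq_prod_range (fun t => lam t ^ 2) T
    rw [h1, h2, ← Finset.prod_div_distrib, Real.log_prod]
    · congr 1
      refine Finset.sum_congr rfl fun t ht => ?_
      have hl : lam t ^ 2 ≠ 0 := (pow_pos (hpos t (Finset.mem_range.mp ht)) 2).ne'
      rw [add_div, div_self hl]
    · intro t ht
      have hl : 0 < lam t ^ 2 := pow_pos (hpos t (Finset.mem_range.mp ht)) 2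
      have := hσ2nn t (Finset.mem_range.mp ht)
      positivity
  have hlog_nn : ∀ t ∈ Finset.range T, 0 ≤ Real.log (1 + u t) := fun t ht =>
    Real.log_nonneg (by linarith [hunn t (Finset.mem_range.mp ht)])
  have hsumlog : ∑ t ∈ Finset.range T, Real.log (1 + u t) ≤ 2 * γ := by
    rw [hIG] at hγ; linarith
  have hγ0 : 0 ≤ γ := by
    have : 0 ≤ ∑ t ∈ Finset.range T, Real.log (1 + u t) := Finset.sum_nonneg hlog_nn
    linarith
  -- the set 𝒯
  set F := (Finset.range T).filter (fun t => std t ≤ lam t) with hF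
  have hFsub : F ⊆ Finset.range T := Finset.filter_subset _ _
  have hu_le_one : ∀ t ∈ F, u t ≤ 1 := by
    intro t ht
    obtain ⟨htr, hle⟩ := Finset.mem_filter.mp ht
    have htT := Finset.mem_range.mp htr
    have hl := hpos t htT
    have h1 : σ2 t ≤ lam t ^ 2 := by
      rw [← hstd_sq t htT]
      exact pow_le_pow_left₀ (hstd_nn t) hle 2
    rw [hudef]
    exact div_le_one_of_le₀ h1 (sq_nonneg _)
  -- sum of u over F
  have hsumu : ∑ t ∈ F, u t ≤ 4 * γ := by
    calc ∑ t ∈ F, u t ≤ ∑ t ∈ F, 2 * Real.log (1 + u t) :=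
          Finset.sum_le_sum fun t ht =>
            key_log (hunn t (Finset.mem_range.mp (hFsub ht))) (hu_le_one t ht)
      _ = 2 * ∑ t ∈ F, Real.log (1 + u t) := by rw [Finset.mul_sum]
      _ ≤ 2 * ∑ t ∈ Finset.range T, Real.log (1 + u t) := by
          have := Finset.sum_le_sum_of_subset_of_nonneg hFsub
            (fun t ht _ => hlog_nn t ht)
          linarith
      _ ≤ 2 * (2 * γ) := by linarith
      _ = 4 * γ := by ring
  -- Cauchy-Schwarz
  have hCS : (∑ t ∈ F, std t) ^ 2 ≤ (∑ t ∈ F, lam t ^ 2) * ∑ t ∈ F, u t := by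
    have h := Finset.sum_mul_sq_le_sq_mul_sq F lam (fun t => std t / lam t)
    have heq1 : ∑ t ∈ F, lam t * (std t / lam t) = ∑ t ∈ F, std t := by
      refine Finset.sum_congr rfl fun t ht => ?_
      have hl := (hpos t (Finset.mem_range.mp (hFsub ht))).ne'
      field_simp
    have heq2 : ∑ t ∈ F, (std t / lam t) ^ 2 = ∑ t ∈ F, u t := by
      refine Finset.sum_congr rfl fun t ht => ?_
      have htT := Finset.mem_range.mp (hFsub ht)
      rw [div_pow, hstd_sq t htT, hudef]
    rw [heq1, heq2] at h
    exact h
  have hlam2sub : ∑ t ∈ F, lam t ^ 2 ≤ ∑ t ∈ Finset.range T, lam t ^ 2 :=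
    Finset.sum_le_sum_of_subset_of_nonneg hFsub (fun t _ _ => sq_nonneg _)
  have hlam2nn : 0 ≤ ∑ t ∈ F, lam t ^ 2 := Finset.sum_nonneg fun t _ => sq_nonneg _
  have hfinal_sq : (∑ t ∈ F, std t) ^ 2 ≤ (∑ t ∈ Finset.range T, lam t ^ 2) * (4 * γ) := by
    calc (∑ t ∈ F, std t) ^ 2 ≤ (∑ t ∈ F, lam t ^ 2) * ∑ t ∈ F, u t := hCS
      _ ≤ (∑ t ∈ Finset.range T, lam t ^ 2) * (4 * γ) := by
          apply mul_le_mul hlam2sub hsumu (Finset.sum_nonneg fun t ht =>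
            hunn t (Finset.mem_range.mp (hFsub ht)))
          linarith [hlam2sub]
  have hsumstd_nn : 0 ≤ ∑ t ∈ F, std t := Finset.sum_nonneg fun t _ => hstd_nn t
  have hprod_nn : 0 ≤ (∑ t ∈ Finset.range T, lam t ^ 2) * γ :=
    mul_nonneg (le_trans hlam2nn hlam2sub) hγ0
  have hrhs_sq : (2 * Real.sqrt ((∑ t ∈ Finset.range T, lam t ^ 2) * γ)) ^ 2
      = (∑ t ∈ Finset.range T, lam t ^ 2) * (4 * γ) := by
    rw [mul_pow, Real.sq_sqrt hprod_nn]; ring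
  have h2 : (∑ t ∈ F, std t) ^ 2
      ≤ (2 * Real.sqrt ((∑ t ∈ Finset.range T, lam t ^ 2) * γ)) ^ 2 := by
    rw [hrhs_sq]; exact hfinal_sq
  calc ∑ t ∈ F, std t = Real.sqrt ((∑ t ∈ F, std t) ^ 2) := (Real.sqrt_sq hsumstd_nn).symm
    _ ≤ Real.sqrt ((2 * Real.sqrt ((∑ t ∈ Finset.range T, lam t ^ 2) * γ)) ^ 2) :=
        Real.sqrt_le_sqrt h2
    _ = 2 * Real.sqrt ((∑ t ∈ Finset.range T, lam t ^ 2) * γ) :=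
        Real.sqrt_sq (by positivity)
end
end

section
/- (Noiseless simple regret of MVR, Matérn case, under a valid deterministic confidence bound.) Fix d ∈ ℕ+, ν > 1/2, α > 0, C̄ > 0 and B > 0. Assume the Matérn-type information-gain bound: for every m ∈ ℕ+, every λ > 0 and every m-tuple Z of points of 𝒳, I_{λ²I_m}(Z) ≤ C̄·(m/λ²)^{d/(2ν+d)}·(ln(1 + m/λ²))^{2ν/(2ν+d)}. Let f : 𝒳 → ℝ satisfy |f(x)| ≤ B for all x ∈ 𝒳 and the noiseless confidence bound: for every finite tuple X of points of 𝒳 with K(X,X) invertible and every x ∈ 𝒳, |f(x) − μ_0(x; X, f(X))| ≤ B·σ_0(x; X), where μ_0, σ_0 are the posterior mean and standard deviation with Σ = 0 and f(X) is the vector of values of f on X. For each T ∈ ℕ+, let x_1,…,x_T ∈ 𝒳 be chosen by maximum variance reduction with Σ = 0 (for every t ∈ [T] and x ∈ 𝒳, σ_0(x; X_{t−1}) ≤ σ_0(x_t; X_{t−1}), with K(X_t,X_t) assumed invertible for all t ≤ T), and let x̂_T ∈ 𝒳 satisfy μ_0(x; X_T, f(X_T)) ≤ μ_0(x̂_T;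 X_T, f(X_T)) for all x ∈ 𝒳. Then there exists C' > 0 depending only on C̄, ν, d, α such that for every T ≥ 2 and every x* ∈ 𝒳: f(x*) − f(x̂_T) ≤ C'·B·T^{−ν/d}·(ln T)^{ν(1+α)/d}. -/
open Matrix Real Finset

noncomputable section

universe u

namespace MVRAux

lemma quad_nonneg {m : ℕ} {M : Matrix (Fin m) (Fin m) ℝ} (hM : M.PosSemidef) (a : Fin m → ℝ) :
    0 ≤ a ⬝ᵥ (M *ᵥ a) := by
  simpa using hM.dotProduct_mulVec_nonneg a

lemma smul_one_posDef {m : ℕ} {c : ℝ} (hc : 0 < c) :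
    (c • (1 : Matrix (Fin m) (Fin m) ℝ)).PosDef := by
  have h : c • (1 : Matrix (Fin m) (Fin m) ℝ) = Matrix.diagonal (fun _ => c) := by
    ext i j
    by_cases h : i = j <;> simp [Matrix.one_apply, Matrix.diagonal, h]
  rw [h]
  exact Matrix.posDef_diagonal_iff.mpr fun _ => hc

lemma min_quad {m : ℕ} {G : Matrix (Fin m) (Fin m) ℝ} (hG : G.PosSemidef)
    (hdet : G.det ≠ 0) (v a : Fin m → ℝ) :
    2 * (a ⬝ᵥ v) - a ⬝ᵥ (G *ᵥ a) ≤ v ⬝ᵥ (G⁻¹ *ᵥ v) := by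
  set w := G⁻¹ *ᵥ v with hw
  have hGw : G *ᵥ w = v := by
    rw [hw, mulVec_mulVec, Matrix.mul_nonsing_inv _ (isUnit_iff_ne_zero.mpr hdet), one_mulVec]
  have hsym : Gᵀ = G := by
    have := hG.1
    rwa [Matrix.IsHermitian, conjTranspose_eq_transpose_of_trivial] at this
  have h0 : 0 ≤ (a - w) ⬝ᵥ (G *ᵥ (a - w)) := quad_nonneg hG _
  have hwGa : w ⬝ᵥ (G *ᵥ a) = a ⬝ᵥ v := by
    rw [dotProduct_mulVec, ← hsym, vecMul_transpose, hGw, dotProduct_comm]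
  have haGw : a ⬝ᵥ (G *ᵥ w) = a ⬝ᵥ v := by rw [hGw]
  have hwGw : w ⬝ᵥ (G *ᵥ w) = v ⬝ᵥ w := by rw [hGw, dotProduct_comm]
  rw [mulVec_sub, sub_dotProduct, dotProduct_sub, dotProduct_sub] at h0
  rw [hw] at hwGa haGw hwGw ⊢
  rw [hw] at h0
  linarith [h0, hwGa, haGw, hwGw]

/-- value of the quadratic at the optimum -/
lemma quad_at_inv {m : ℕ} {G : Matrix (Fin m) (Fin m) ℝ}
    (hdet : G.det ≠ 0) (v : Fin m → ℝ) :
    (G⁻¹ *ᵥ v) ⬝ᵥ (G *ᵥ (G⁻¹ *ᵥ v)) = v ⬝ᵥ (G⁻¹ *ᵥ v) := by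
  have hGw : G *ᵥ (G⁻¹ *ᵥ v) = v := by
    rw [mulVec_mulVec, Matrix.mul_nonsing_inv _ (isUnit_iff_ne_zero.mpr hdet), one_mulVec]
  rw [hGw, dotProduct_comm]

lemma dot_inv_nonneg {m : ℕ} {G : Matrix (Fin m) (Fin m) ℝ} (hG : G.PosSemidef)
    (hdet : G.det ≠ 0) (v : Fin m → ℝ) :
    0 ≤ v ⬝ᵥ (G⁻¹ *ᵥ v) := by
  rw [← quad_at_inv hdet v]
  exact quad_nonneg hG _

lemma aug_nonneg {𝒳 : Type u} {k : 𝒳 → 𝒳 → ℝ} (hk : IsKernel k) {m : ℕ}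
    (X : Fin m → 𝒳) (x : 𝒳) (a : Fin m → ℝ) :
    0 ≤ k x x - 2 * (a ⬝ᵥ kVec k X x) + a ⬝ᵥ (gramMat k X *ᵥ a) := by
  have h := quad_nonneg (hk.2 (m+1) (Fin.cons x X)) (Fin.cons 1 (-a))
  have expand : (Fin.cons 1 (-a) : Fin (m+1) → ℝ) ⬝ᵥ (gramMat k (Fin.cons x X) *ᵥ Fin.cons 1 (-a))
      = k x x - 2 * (a ⬝ᵥ kVec k X x) + a ⬝ᵥ (gramMat k X *ᵥ a) := by
    simp only [dotProduct, mulVec, gramMat, kVec, Matrix.of_apply, Fin.sum_univ_succ,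
      Fin.cons_zero, Fin.cons_succ, Pi.neg_apply]
    have hsymm : ∀ i, k (X i) x = k x (X i) := fun i => hk.1 (X i) x
    simp only [hsymm, mul_add, add_mul, Finset.mul_sum, Finset.sum_add_distrib, mul_neg, neg_mul,
      Finset.sum_neg_distrib]
    have hcm : ∀ i, k x (X i) * a i = a i * k x (X i) := fun i => mul_comm _ _
    simp only [hcm]
    ring_nf
    have h2 : (∑ i : Fin m, 2 * a i * k x (X i)) = (∑ i : Fin m, a i * k x (X i)) * 2 := by
      rw [Finset.sum_mul]; exact Finset.sum_congr rfl fun i _ => by ring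
    rw [Finset.sum_mul]; ring
  linarith [expand ▸ h]

section PostVar

variable {𝒳 : Type u} {k : 𝒳 → 𝒳 → ℝ} (hk : IsKernel k)
include hk

lemma gram_add_smul_posDef {m : ℕ} (X : Fin m → 𝒳) {l : ℝ} (hl : l ≠ 0) :
    (gramMat k X + (l ^ 2) • (1 : Matrix (Fin m) (Fin m) ℝ)).PosDef :=
  Matrix.PosDef.posSemidef_add (hk.2 m X) (smul_one_posDef (by positivity))

lemma postVar_zero_nonneg {m : ℕ} (X : Fin m → 𝒳) (hdet : (gramMat k X).det ≠ 0) (x : 𝒳) :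
    0 ≤ postVar k (0 : Matrix (Fin m) (Fin m) ℝ) X x := by
  have h := aug_nonneg hk X x ((gramMat k X)⁻¹ *ᵥ kVec k X x)
  have hq := quad_at_inv hdet (kVec k X x)
  have hdv : ((gramMat k X)⁻¹ *ᵥ kVec k X x) ⬝ᵥ kVec k X x
      = kVec k X x ⬝ᵥ ((gramMat k X)⁻¹ *ᵥ kVec k X x) := dotProduct_comm _ _
  simp only [postVar, add_zero]
  linarith

lemma postVar_noisy_nonneg {m : ℕ} (X : Fin m → 𝒳) {l : ℝ} (hl : l ≠ 0) (x : 𝒳) :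
    0 ≤ postVar k ((l ^ 2) • (1 : Matrix (Fin m) (Fin m) ℝ)) X x := by
  set G := gramMat k X + (l ^ 2) • (1 : Matrix (Fin m) (Fin m) ℝ) with hGdef
  have hGpd := gram_add_smul_posDef hk X hl
  have hdet : G.det ≠ 0 := hGpd.det_pos.ne'
  set w := G⁻¹ *ᵥ kVec k X x with hwdef
  have h := aug_nonneg hk X x w
  have hq : w ⬝ᵥ (G *ᵥ w) = kVec k X x ⬝ᵥ w := quad_at_inv hdet (kVec k X x)
  have hsplit : w ⬝ᵥ (G *ᵥ w) = w ⬝ᵥ (gramMat k X *ᵥ w) + l ^ 2 * (w ⬝ᵥ w) := by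
    rw [hGdef, add_mulVec, dotProduct_add, smul_mulVec, one_mulVec, dotProduct_smul]
    simp [smul_eq_mul]
  have hww : 0 ≤ w ⬝ᵥ w := Finset.sum_nonneg fun i _ => mul_self_nonneg _
  have hdv : w ⬝ᵥ kVec k X x = kVec k X x ⬝ᵥ w := dotProduct_comm _ _
  have hl2 : 0 ≤ l ^ 2 * (w ⬝ᵥ w) := by positivity
  simp only [postVar]
  rw [← hGdef, ← hwdef]
  linarith

lemma postVar_zero_le_noisy {m : ℕ} (X : Fin m → 𝒳) (hdet : (gramMat k X).det ≠ 0)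
    {l : ℝ} (hl : l ≠ 0) (x : 𝒳) :
    postVar k (0 : Matrix (Fin m) (Fin m) ℝ) X x
      ≤ postVar k ((l ^ 2) • (1 : Matrix (Fin m) (Fin m) ℝ)) X x := by
  set v := kVec k X x with hv
  set G := gramMat k X + (l ^ 2) • (1 : Matrix (Fin m) (Fin m) ℝ) with hGdef
  have hGpd := gram_add_smul_posDef hk X hl
  have hdetG : G.det ≠ 0 := hGpd.det_pos.ne'
  set w := G⁻¹ *ᵥ v with hwdef
  have h1 : 2 * (w ⬝ᵥ v) - w ⬝ᵥ (gramMat k X *ᵥ w) ≤ v ⬝ᵥ ((gramMat k X)⁻¹ *ᵥ v) :=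
    min_quad (hk.2 m X) hdet v w
  have hq : w ⬝ᵥ (G *ᵥ w) = v ⬝ᵥ w := quad_at_inv hdetG v
  have hsplit : w ⬝ᵥ (G *ᵥ w) = w ⬝ᵥ (gramMat k X *ᵥ w) + l ^ 2 * (w ⬝ᵥ w) := by
    rw [hGdef, add_mulVec, dotProduct_add, smul_mulVec, one_mulVec, dotProduct_smul]
    simp [smul_eq_mul]
  have hww : 0 ≤ w ⬝ᵥ w := Finset.sum_nonneg fun i _ => mul_self_nonneg _
  have hl2 : 0 ≤ l ^ 2 * (w ⬝ᵥ w) := by positivity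
  have hdv : w ⬝ᵥ v = v ⬝ᵥ w := dotProduct_comm _ _
  simp only [postVar, add_zero]
  rw [← hv, ← hGdef, ← hwdef]
  linarith

lemma postVar_le_diag {m : ℕ} (X : Fin m → 𝒳) (hdet : (gramMat k X).det ≠ 0) (x : 𝒳) :
    postVar k (0 : Matrix (Fin m) (Fin m) ℝ) X x ≤ k x x := by
  have := dot_inv_nonneg (hk.2 m X) hdet (kVec k X x)
  simp only [postVar, add_zero]
  linarith


/-- padding a vector with zeros -/
def pad {t n : ℕ} (h : t ≤ n) (b : Fin t → ℝ) : Fin n → ℝ :=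
  fun i => if hi : i.val < t then b ⟨i.val, hi⟩ else 0

omit hk in
lemma pad_dot {t n : ℕ} (h : t ≤ n) (b : Fin t → ℝ) (g : Fin n → ℝ) :
    pad h b ⬝ᵥ g = ∑ i : Fin t, b i * g (Fin.castLE h i) := by
  classical
  set F : ℕ → ℝ := fun j => if hj : j < t then b ⟨j, hj⟩ * g (Fin.castLE h ⟨j, hj⟩) else 0 with hF
  have key : ∀ i : Fin n, pad h b i * g i = F i.val := by
    intro i
    by_cases hi : i.val < t
    · rw [hF]
      simp only [pad, dif_pos hi]
      congr
    · rw [hF]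
      simp [pad, dif_neg hi]
  have key2 : ∀ i : Fin t, F i.val = b i * g (Fin.castLE h i) := by
    intro i
    rw [hF]
    simp only [i.isLt, dif_pos]
    try congr
  rw [dotProduct]
  rw [Finset.sum_congr rfl fun i _ => key i]
  rw [Fin.sum_univ_eq_sum_range F n]
  rw [← Finset.sum_subset (Finset.range_subset_range.mpr h) (fun j _ hj => by
    rw [hF]
    simp only [Finset.mem_range] at hj
    simp [dif_neg hj])]
  rw [← Fin.sum_univ_eq_sum_range F t]
  exact Finset.sum_congr rfl fun i _ => key2 i

omit hk in
lemma dot_pad {t n : ℕ} (h : t ≤ n) (b : Fin t → ℝ) (g : Fin n → ℝ) :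
    g ⬝ᵥ pad h b = ∑ i : Fin t, b i * g (Fin.castLE h i) := by
  rw [dotProduct_comm, pad_dot]

lemma postVar_mono (z : ℕ → 𝒳) {t n : ℕ} (h : t ≤ n)
    (hdt : (gramMat k (preT z t)).det ≠ 0) (hdn : (gramMat k (preT z n)).det ≠ 0) (x : 𝒳) :
    postVar k (0 : Matrix (Fin n) (Fin n) ℝ) (preT z n) x
      ≤ postVar k (0 : Matrix (Fin t) (Fin t) ℝ) (preT z t) x := by
  classical
  set Kt := gramMat k (preT z t) with hKt
  set Kn := gramMat k (preT z n) with hKn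
  set vt := kVec k (preT z t) x with hvt
  set vn := kVec k (preT z n) x with hvn
  set w := Kt⁻¹ *ᵥ vt with hwdef
  set a : Fin n → ℝ := pad h w with ha
  -- dot products of padded vector
  have hcast : ∀ i : Fin t, preT z n (Fin.castLE h i) = preT z t i := fun i => rfl
  have h1 : a ⬝ᵥ vn = w ⬝ᵥ vt := by
    rw [ha, pad_dot]
    exact Finset.sum_congr rfl fun i _ => rfl
  have h2 : a ⬝ᵥ (Kn *ᵥ a) = w ⬝ᵥ (Kt *ᵥ w) := by
    rw [ha, pad_dot]
    refine Finset.sum_congr rfl fun i _ => ?_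
    congr 1
    show (Kn *ᵥ pad h w) (Fin.castLE h i) = (Kt *ᵥ w) i
    simp only [mulVec, dotProduct]
    rw [show (∑ j : Fin n, Kn (Fin.castLE h i) j * pad h w j)
        = pad h w ⬝ᵥ (fun j => Kn (Fin.castLE h i) j) from by
      rw [dotProduct]; exact Finset.sum_congr rfl fun j _ => mul_comm _ _]
    rw [pad_dot]
    exact Finset.sum_congr rfl fun j _ => mul_comm _ _
  have hmin : 2 * (a ⬝ᵥ vn) - a ⬝ᵥ (Kn *ᵥ a) ≤ vn ⬝ᵥ (Kn⁻¹ *ᵥ vn) :=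
    min_quad (hk.2 n (preT z n)) hdn vn a
  have hq : w ⬝ᵥ (Kt *ᵥ w) = vt ⬝ᵥ w := quad_at_inv hdt vt
  have hdv : w ⬝ᵥ vt = vt ⬝ᵥ w := dotProduct_comm _ _
  simp only [postVar, add_zero, ← hKt, ← hKn, ← hvt, ← hvn, ← hwdef]
  linarith


lemma det_snoc {m : ℕ} (X : Fin m → 𝒳) (x : 𝒳) {l : ℝ} (hl : l ≠ 0) :
    (gramMat k (Fin.snoc X x) + (l ^ 2) • (1 : Matrix (Fin (m+1)) (Fin (m+1)) ℝ)).det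
      = (gramMat k X + (l ^ 2) • (1 : Matrix (Fin m) (Fin m) ℝ)).det
        * (l ^ 2 + postVar k ((l ^ 2) • (1 : Matrix (Fin m) (Fin m) ℝ)) X x) := by
  classical
  set A := gramMat k X + (l ^ 2) • (1 : Matrix (Fin m) (Fin m) ℝ) with hA
  have hApd := gram_add_smul_posDef hk X hl
  rw [← hA] at hApd
  haveI : Invertible A := hApd.isUnit.invertible
  set M := gramMat k (Fin.snoc X x) + (l ^ 2) • (1 : Matrix (Fin (m+1)) (Fin (m+1)) ℝ) with hM
  set B : Matrix (Fin m) (Fin 1) ℝ := Matrix.of fun i _ => k (X i) x with hB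
  set C : Matrix (Fin 1) (Fin m) ℝ := Matrix.of fun _ j => k x (X j) with hC
  set D : Matrix (Fin 1) (Fin 1) ℝ := Matrix.of fun _ _ => k x x + l ^ 2 with hD
  have hsnocL : ∀ i : Fin m, (Fin.snoc X x : Fin (m+1) → 𝒳) (finSumFinEquiv (Sum.inl i)) = X i := by
    intro i
    rw [finSumFinEquiv_apply_left]
    exact Fin.snoc_castSucc ..
  have hsnocR : ∀ j : Fin 1, (Fin.snoc X x : Fin (m+1) → 𝒳) (finSumFinEquiv (Sum.inr j)) = x := by
    intro j
    rw [finSumFinEquiv_apply_right]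
    have : Fin.natAdd m j = Fin.last m := by
      ext
      simp [Fin.natAdd, Subsingleton.elim j 0]
    rw [this]
    exact Fin.snoc_last ..
  have hsub : M.submatrix (finSumFinEquiv : Fin m ⊕ Fin 1 ≃ Fin (m+1))
      (finSumFinEquiv : Fin m ⊕ Fin 1 ≃ Fin (m+1)) = Matrix.fromBlocks A B C D := by
    ext a b
    have hone : ∀ a b : Fin m ⊕ Fin 1,
        (1 : Matrix (Fin (m+1)) (Fin (m+1)) ℝ) (finSumFinEquiv a) (finSumFinEquiv b)
          = if a = b then 1 else 0 := by
      intro a b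
      rw [Matrix.one_apply]
      simp [Equiv.apply_eq_iff_eq]
    cases a with
    | inl i =>
      cases b with
      | inl j =>
        show M _ _ = A i j
        rw [hM, hA]
        simp only [Matrix.add_apply, Matrix.smul_apply, gramMat, Matrix.of_apply, hsnocL,
          smul_eq_mul, hone]
        simp [Matrix.one_apply]
      | inr j =>
        show M _ _ = B i j
        rw [hM, hB]
        simp only [Matrix.add_apply, Matrix.smul_apply, gramMat, Matrix.of_apply, hsnocL, hsnocR,
          smul_eq_mul, hone]
        simp
    | inr i =>
      cases b with
      | inl j =>
        show M _ _ = C i j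
        rw [hM, hC]
        simp only [Matrix.add_apply, Matrix.smul_apply, gramMat, Matrix.of_apply, hsnocL, hsnocR,
          smul_eq_mul, hone]
        simp
      | inr j =>
        show M _ _ = D i j
        rw [hM, hD]
        simp only [Matrix.add_apply, Matrix.smul_apply, gramMat, Matrix.of_apply, hsnocR,
          smul_eq_mul, hone]
        simp [Subsingleton.elim i j]
  have hdet1 : M.det = (Matrix.fromBlocks A B C D).det := by
    rw [← hsub, Matrix.det_submatrix_equiv_self]
  rw [hdet1, Matrix.det_fromBlocks₁₁]
  congr 1
  rw [Matrix.invOf_eq_nonsing_inv, Matrix.det_fin_one]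
  have hCAB : (C * A⁻¹ * B) 0 0 = kVec k X x ⬝ᵥ (A⁻¹ *ᵥ kVec k X x) := by
    simp only [Matrix.mul_apply, mulVec, dotProduct, kVec, hB, hC, Matrix.of_apply,
      Finset.sum_mul, Finset.mul_sum]
    rw [Finset.sum_comm]
    refine Finset.sum_congr rfl fun i _ => Finset.sum_congr rfl fun j _ => ?_
    rw [hk.1 (X j) x]
    ring
  simp only [Matrix.sub_apply, hD, Matrix.of_apply, hCAB, postVar, ← hA]
  ring

lemma det_chain (z : ℕ → 𝒳) {l : ℝ} (hl : l ≠ 0) : ∀ n : ℕ,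
    (gramMat k (preT z n) + (l ^ 2) • (1 : Matrix (Fin n) (Fin n) ℝ)).det
      = ∏ t ∈ Finset.range n,
          (l ^ 2 + postVar k ((l ^ 2) • (1 : Matrix (Fin t) (Fin t) ℝ)) (preT z t) (z t)) := by
  intro n
  induction n with
  | zero => simp [Matrix.det_fin_zero]
  | succ n ih =>
    have hpre : preT z (n+1) = Fin.snoc (preT z n) (z n) := by
      funext i
      refine Fin.lastCases ?_ (fun j => ?_) i
      · rw [Fin.snoc_last]
        rfl
      · rw [Fin.snoc_castSucc]
        rfl
    rw [hpre, det_snoc hk (preT z n) (z n) hl, ih, Finset.prod_range_succ]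

end PostVar



lemma core_numeric (d : ℕ) (hd : 0 < d) (ν : ℝ) (hν : 0 < ν) (Cb : ℝ) (hCb : 0 < Cb) :
    ∃ C3 : ℝ, 1 ≤ C3 ∧ ∀ T : ℕ, 3 ≤ T → ∀ s : ℝ, 0 < s →
      (T : ℝ) * Real.log 2
          ≤ 2 * Cb * ((T : ℝ) / s) ^ ((d : ℝ) / (2 * ν + (d : ℝ)))
            * (Real.log (1 + (T : ℝ) / s)) ^ (1 - (d : ℝ) / (2 * ν + (d : ℝ))) →
      s ≤ C3 * (T : ℝ) ^ (-(2 * ν / (d : ℝ))) * (Real.log (T : ℝ)) ^ (2 * ν / (d : ℝ)) := by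
  have hdR : (0 : ℝ) < d := by exact_mod_cast hd
  set θ : ℝ := (d : ℝ) / (2 * ν + (d : ℝ)) with hθdef
  set p : ℝ := 2 * ν / (d : ℝ) with hpdef
  have hden : (0 : ℝ) < 2 * ν + d := by linarith
  have hθpos : 0 < θ := by positivity
  have hppos : 0 < p := by positivity
  have hθ1 : θ ≤ 1 := by
    rw [hθdef, div_le_one hden]; linarith
  have hth : θ * (1 + p) = 1 := by
    rw [hθdef, hpdef]; field_simp; ring
  have hl2 : (0:ℝ) < Real.log 2 := Real.log_pos (by norm_num)
  set c₁ : ℝ := 2 + p with hc₁def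
  have hc₁pos : 0 < c₁ := by positivity
  refine ⟨max 1 (Real.exp ((1 + p) * (Real.log (2 * Cb) - Real.log (Real.log 2))
      + p * Real.log c₁)), le_max_left _ _, ?_⟩
  set C3 : ℝ := max 1 (Real.exp ((1 + p) * (Real.log (2 * Cb) - Real.log (Real.log 2))
      + p * Real.log c₁)) with hC3def
  have hC3pos : (0:ℝ) < C3 := lt_of_lt_of_le one_pos (le_max_left _ _)
  have hlC3 : (1 + p) * (Real.log (2 * Cb) - Real.log (Real.log 2)) + p * Real.log c₁
      ≤ Real.log C3 := by
    rw [hC3def]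
    calc _ = Real.log (Real.exp ((1 + p) * (Real.log (2 * Cb) - Real.log (Real.log 2))
        + p * Real.log c₁)) := (Real.log_exp _).symm
      _ ≤ _ := Real.log_le_log (Real.exp_pos _) (le_max_right _ _)
  intro T hT s hs h
  have hT3 : (3:ℝ) ≤ (T:ℝ) := by exact_mod_cast hT
  have hTpos : (0:ℝ) < T := by linarith
  have hlogT : 1 ≤ Real.log T := by
    rw [Real.le_log_iff_exp_le hTpos]
    calc Real.exp 1 ≤ 2.7182818286 := le_of_lt Real.exp_one_lt_d9
      _ ≤ (T:ℝ) := by norm_num; linarith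
  have hlogTpos : 0 < Real.log T := by linarith
  have hTm : (0:ℝ) < (T:ℝ) ^ (-p) := Real.rpow_pos_of_pos hTpos _
  have hlogTp : 1 ≤ Real.log (T:ℝ) ^ p := by
    calc (1:ℝ) = (1:ℝ) ^ p := (Real.one_rpow p).symm
      _ ≤ Real.log (T:ℝ) ^ p := Real.rpow_le_rpow zero_le_one hlogT hppos.le
  by_cases hcase : s ≤ (T:ℝ) ^ (-p)
  · have h1 : 1 ≤ C3 * Real.log (T:ℝ) ^ p := by
      calc (1:ℝ) = 1 * 1 := by ring
        _ ≤ C3 * Real.log (T:ℝ) ^ p :=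
          mul_le_mul (le_max_left _ _) hlogTp zero_le_one hC3pos.le
    calc s ≤ (T:ℝ) ^ (-p) := hcase
      _ = 1 * ((T:ℝ) ^ (-p)) := (one_mul _).symm
      _ ≤ (C3 * Real.log (T:ℝ) ^ p) * ((T:ℝ) ^ (-p)) :=
          mul_le_mul_of_nonneg_right h1 hTm.le
      _ = C3 * (T:ℝ) ^ (-p) * Real.log (T:ℝ) ^ p := by ring
  · push_neg at hcase
    set A : ℝ := (T:ℝ) / s with hAdef
    have hApos : 0 < A := by positivity
    have hA1 : A < (T:ℝ) ^ (1 + p) := by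
      have h1 : A < (T:ℝ) / ((T:ℝ) ^ (-p)) := by
        exact div_lt_div_of_pos_left hTpos hTm hcase
      have h2 : (T:ℝ) / ((T:ℝ) ^ (-p)) = (T:ℝ) ^ (1 + p) := by
        rw [Real.rpow_add hTpos, Real.rpow_one, Real.rpow_neg hTpos.le]
        field_simp
      linarith [h2 ▸ h1]
    set L : ℝ := Real.log (1 + A) with hLdef
    have hLpos : 0 < L := Real.log_pos (by linarith)
    have hTp1 : 1 ≤ (T:ℝ) ^ (1 + p) := by
      calc (1:ℝ) = (1:ℝ) ^ (1+p) := (Real.one_rpow _).symm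
        _ ≤ (T:ℝ) ^ (1 + p) := Real.rpow_le_rpow zero_le_one (by linarith) (by positivity)
    have hL : L ≤ c₁ * Real.log T := by
      have step1 : 1 + A ≤ (T:ℝ) ^ ((2:ℝ) + p) := by
        have : (T:ℝ) ^ ((2:ℝ) + p) = (T:ℝ) * ((T:ℝ) * (T:ℝ) ^ p) := by
          rw [show (2:ℝ) + p = 1 + (1 + p) by ring, Real.rpow_add hTpos, Real.rpow_one,
            Real.rpow_add hTpos, Real.rpow_one]
        have h3 : 1 + A ≤ 2 * (T:ℝ) ^ (1 + p) := by linarith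
        have h4 : 2 * (T:ℝ) ^ (1 + p) ≤ (T:ℝ) * (T:ℝ) ^ (1+p) := by
          apply mul_le_mul_of_nonneg_right (by linarith) (by positivity)
        rw [this]
        calc 1 + A ≤ 2 * (T:ℝ) ^ (1+p) := h3
          _ ≤ (T:ℝ) * (T:ℝ) ^ (1+p) := h4
          _ = (T:ℝ) * ((T:ℝ) * (T:ℝ) ^ p) := by
            rw [Real.rpow_add hTpos, Real.rpow_one]
      calc L ≤ Real.log ((T:ℝ) ^ ((2:ℝ) + p)) := Real.log_le_log (by linarith) step1
        _ = (2 + p) * Real.log T := Real.log_rpow hTpos _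
        _ = c₁ * Real.log T := by rw [hc₁def]
    -- log-space version of the main hypothesis
    have hApow : (0:ℝ) < A ^ θ := Real.rpow_pos_of_pos hApos _
    have hLpow : (0:ℝ) < L ^ (1 - θ) := Real.rpow_pos_of_pos hLpos _
    have hstar : Real.log (T:ℝ) + Real.log (Real.log 2)
        ≤ Real.log (2 * Cb) + θ * Real.log A + (1 - θ) * Real.log L := by
      have hlhs : (0:ℝ) < (T:ℝ) * Real.log 2 := by positivity
      have := Real.log_le_log hlhs h
      rw [Real.log_mul hTpos.ne' hl2.ne'] at this
      rw [Real.log_mul (by positivity) hLpow.ne', Real.log_mul (by positivity) hApow.ne',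
        Real.log_rpow hApos, Real.log_rpow hLpos] at this
      linarith
    have hLA : Real.log A = Real.log T - Real.log s := Real.log_div hTpos.ne' hs.ne'
    have hLL : Real.log L ≤ Real.log c₁ + Real.log (Real.log T) := by
      calc Real.log L ≤ Real.log (c₁ * Real.log T) := Real.log_le_log hLpos hL
        _ = Real.log c₁ + Real.log (Real.log T) := Real.log_mul hc₁pos.ne' hlogTpos.ne'
    -- multiply hstar by (1+p) ≥ 0
    have hmul := mul_le_mul_of_nonneg_left hstar (show (0:ℝ) ≤ 1 + p by positivity)
    have hid1 : (1 + p) * (θ * Real.log A) = Real.log A := by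
      have : (1 + p) * (θ * Real.log A) = (θ * (1 + p)) * Real.log A := by ring
      rw [this, hth, one_mul]
    have hid2 : (1 + p) * ((1 - θ) * Real.log L) = p * Real.log L := by
      have h5 : (1 + p) * (1 - θ) = p := by linear_combination (-1 : ℝ) * hth
      calc (1 + p) * ((1 - θ) * Real.log L) = ((1 + p) * (1 - θ)) * Real.log L := by ring
        _ = p * Real.log L := by rw [h5]
    have hmul2 : p * Real.log L ≤ p * (Real.log c₁ + Real.log (Real.log T)) :=
      mul_le_mul_of_nonneg_left hLL hppos.le
    -- conclude in log space
    have hgoal_log : Real.log s ≤ Real.log C3 - p * Real.log T + p * Real.log (Real.log T) := by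
      linarith [hmul, hid1, hid2, hmul2, hlC3, hLA]
    have hrhs_pos : 0 < C3 * (T:ℝ) ^ (-p) * Real.log (T:ℝ) ^ p := by positivity
    rw [← Real.log_le_log_iff hs hrhs_pos]
    calc Real.log s ≤ Real.log C3 - p * Real.log T + p * Real.log (Real.log T) := hgoal_log
      _ = Real.log (C3 * (T:ℝ) ^ (-p) * Real.log (T:ℝ) ^ p) := by
        rw [Real.log_mul (by positivity) (by positivity),
          Real.log_mul hC3pos.ne' hTm.ne', Real.log_rpow hTpos, Real.log_rpow hlogTpos]
        ring

end MVRAux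

/-- noiseless simple regret of MVR, Matérn case, under a valid
deterministic confidence bound; `C'` depends only on `C̄`, `ν`, `d`, `α`. -/
theorem noiseless_mvr_simple_regret_Matern
    (d : ℕ) (hd : 0 < d) (ν : ℝ) (hν : 1 / 2 < ν) (α : ℝ) (hα : 0 < α)
    (Cb : ℝ) (hCb : 0 < Cb) (B : ℝ) (hB : 0 < B) :
    ∃ C' : ℝ, 0 < C' ∧
      ∀ (𝒳 : Type u) (k : 𝒳 → 𝒳 → ℝ), IsKernel k →
      (∀ m : ℕ, 0 < m → ∀ l : ℝ, 0 < l → ∀ Z : Fin m → 𝒳,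
        infoGain k ((l ^ 2) • (1 : Matrix (Fin m) (Fin m) ℝ)) Z
          ≤ Cb * ((m : ℝ) / l ^ 2) ^ ((d : ℝ) / (2 * ν + (d : ℝ)))
              * (Real.log (1 + (m : ℝ) / l ^ 2)) ^ (2 * ν / (2 * ν + (d : ℝ)))) →
      ∀ f : 𝒳 → ℝ, (∀ x, |f x| ≤ B) →
      (∀ (m : ℕ) (X : Fin m → 𝒳), (gramMat k X).det ≠ 0 → ∀ x : 𝒳,
        |f x - postMean k (0 : Matrix (Fin m) (Fin m) ℝ) X (fun i => f (X i)) x|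
          ≤ B * postStd k (0 : Matrix (Fin m) (Fin m) ℝ) X x) →
      ∀ (xs : ℕ → ℕ → 𝒳) (xhat : ℕ → 𝒳),
      (∀ T : ℕ, 0 < T → ∀ t ≤ T, (gramMat k (preT (xs T) t)).det ≠ 0) →
      (∀ T : ℕ, 0 < T → ∀ t < T, ∀ x : 𝒳,
        postStd k (0 : Matrix (Fin t) (Fin t) ℝ) (preT (xs T) t) x
          ≤ postStd k (0 : Matrix (Fin t) (Fin t) ℝ) (preT (xs T) t) (xs T t)) →
      (∀ T : ℕ, 0 < T → ∀ x : 𝒳,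
        postMean k (0 : Matrix (Fin T) (Fin T) ℝ) (preT (xs T) T)
            (fun i : Fin T => f (xs T i.val)) x
          ≤ postMean k (0 : Matrix (Fin T) (Fin T) ℝ) (preT (xs T) T)
              (fun i : Fin T => f (xs T i.val)) (xhat T)) →
      ∀ T : ℕ, 2 ≤ T → ∀ xstar : 𝒳,
        f xstar - f (xhat T)
          ≤ C' * B * (T : ℝ) ^ (-(ν / (d : ℝ)))
              * (Real.log (T : ℝ)) ^ (ν * (1 + α) / (d : ℝ)) := by
  classical
  obtain ⟨C3, hC3one, hcore⟩ := MVRAux.core_numeric d hd ν (by linarith) Cb hCb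
  have hdR : (0 : ℝ) < d := by exact_mod_cast hd
  have hνpos : (0:ℝ) < ν := by linarith
  have hC3pos : (0:ℝ) < C3 := lt_of_lt_of_le one_pos hC3one
  have hl2pos : (0:ℝ) < Real.log 2 := Real.log_pos (by norm_num)
  set q : ℝ := ν * (1 + α) / (d : ℝ) with hqdef
  have hqpos : 0 < q := by positivity
  set c2 : ℝ := 2 * (2:ℝ) ^ (ν/(d:ℝ)) * (Real.log 2) ^ (-q) with hc2def
  have hc2pos : 0 < c2 := by positivity
  refine ⟨max (2 * Real.sqrt C3) c2, lt_of_lt_of_le hc2pos (le_max_right _ _), ?_⟩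
  set C' : ℝ := max (2 * Real.sqrt C3) c2 with hC'def
  intro 𝒳 k hker hIG f hfB hconf xs xhat hdet hMVR hmean T hT xstar
  have hTpos : 0 < T := by omega
  have hTposR : (0:ℝ) < T := by exact_mod_cast hTpos
  -- regret decomposition (any T > 0)
  set X : Fin T → 𝒳 := preT (xs T) T with hX
  have hdT : (gramMat k X).det ≠ 0 := hdet T hTpos T le_rfl
  have hregret : f xstar - f (xhat T)
      ≤ B * postStd k (0 : Matrix (Fin T) (Fin T) ℝ) X xstar
        + B * postStd k (0 : Matrix (Fin T) (Fin T) ℝ) X (xhat T) := by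
    have h1 := hconf T X hdT xstar
    have h2 := hconf T X hdT (xhat T)
    have h3 := hmean T hTpos xstar
    have e1 : postMean k (0 : Matrix (Fin T) (Fin T) ℝ) X (fun i => f (X i)) xstar
        = postMean k (0 : Matrix (Fin T) (Fin T) ℝ) (preT (xs T) T)
            (fun i : Fin T => f (xs T i.val)) xstar := rfl
    have e2 : postMean k (0 : Matrix (Fin T) (Fin T) ℝ) X (fun i => f (X i)) (xhat T)
        = postMean k (0 : Matrix (Fin T) (Fin T) ℝ) (preT (xs T) T)
            (fun i : Fin T => f (xs T i.val)) (xhat T) := rfl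
    rw [e1] at h1
    rw [e2] at h2
    have h1' := (abs_le.mp h1).2
    have h2' := (abs_le.mp h2).1
    linarith
  by_cases hT2 : T = 2
  · -- small case : trivial bound
    subst hT2
    have hb1 := abs_le.mp (hfB xstar)
    have hb2 := abs_le.mp (hfB (xhat 2))
    have hcast : ((2:ℕ):ℝ) = (2:ℝ) := by norm_num
    rw [hcast]
    have hfact : c2 * ((2:ℝ) ^ (-(ν / (d:ℝ)))) * (Real.log 2) ^ q = 2 := by
      rw [hc2def]
      have e3 : (2:ℝ) ^ (ν/(d:ℝ)) * (2:ℝ) ^ (-(ν / (d:ℝ))) = 1 := by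
        rw [← Real.rpow_add two_pos]
        simp
      have e4 : (Real.log 2) ^ (-q) * (Real.log 2) ^ q = 1 := by
        rw [← Real.rpow_add hl2pos]
        simp
      calc 2 * (2:ℝ) ^ (ν/(d:ℝ)) * (Real.log 2) ^ (-q) * ((2:ℝ) ^ (-(ν / (d:ℝ))))
            * (Real.log 2) ^ q
          = 2 * ((2:ℝ) ^ (ν/(d:ℝ)) * (2:ℝ) ^ (-(ν / (d:ℝ))))
            * ((Real.log 2) ^ (-q) * (Real.log 2) ^ q) := by ring
        _ = 2 := by rw [e3, e4]; ring
    have hpos2 : (0:ℝ) < ((2:ℝ) ^ (-(ν / (d:ℝ)))) * (Real.log 2) ^ q := by positivity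
    have hge : c2 * B * ((2:ℝ) ^ (-(ν / (d:ℝ)))) * (Real.log 2) ^ q = 2 * B := by
      calc c2 * B * ((2:ℝ) ^ (-(ν / (d:ℝ)))) * (Real.log 2) ^ q
          = (c2 * ((2:ℝ) ^ (-(ν / (d:ℝ)))) * (Real.log 2) ^ q) * B := by ring
        _ = 2 * B := by rw [hfact]
    have hC'c2 : c2 ≤ C' := le_max_right _ _
    have hmono : c2 * B * ((2:ℝ) ^ (-(ν / (d:ℝ)))) * (Real.log 2) ^ q
        ≤ C' * B * ((2:ℝ) ^ (-(ν / (d:ℝ)))) * (Real.log 2) ^ q := by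
      have : 0 ≤ B * ((2:ℝ) ^ (-(ν / (d:ℝ)))) * (Real.log 2) ^ q := by positivity
      nlinarith
    linarith
  · -- main case : T ≥ 3
    have hT3 : 3 ≤ T := by omega
    have hT3R : (3:ℝ) ≤ (T:ℝ) := by exact_mod_cast hT3
    have hlogT : 1 ≤ Real.log T := by
      rw [Real.le_log_iff_exp_le hTposR]
      calc Real.exp 1 ≤ 2.7182818286 := le_of_lt Real.exp_one_lt_d9
        _ ≤ (T:ℝ) := by norm_num; linarith
    have hlogTpos : 0 < Real.log T := by linarith
    -- key variance bound
    have key : ∀ x : 𝒳, postStd k (0 : Matrix (Fin T) (Fin T) ℝ) X x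
        ≤ Real.sqrt C3 * (T:ℝ) ^ (-(ν / (d:ℝ))) * (Real.log (T:ℝ)) ^ (ν / (d:ℝ)) := by
      intro x
      set s : ℝ := postVar k (0 : Matrix (Fin T) (Fin T) ℝ) X x with hsdef
      have hs0 : 0 ≤ s := MVRAux.postVar_zero_nonneg hker X hdT x
      have hRpos : 0 ≤ Real.sqrt C3 * (T:ℝ) ^ (-(ν / (d:ℝ))) * (Real.log (T:ℝ)) ^ (ν / (d:ℝ)) := by
        positivity
      rcases eq_or_lt_of_le hs0 with hs | hspos
      · rw [postStd, ← hsdef, ← hs, Real.sqrt_zero]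
        exact hRpos
      · set l : ℝ := Real.sqrt s with hldef
        have hl2 : l ^ 2 = s := Real.sq_sqrt hs0
        have hlpos : 0 < l := Real.sqrt_pos.mpr hspos
        -- step 1 : each posterior variance along the way is at least s
        have hstep : ∀ t, t < T → s ≤ postVar k ((l ^ 2) • (1 : Matrix (Fin t) (Fin t) ℝ))
            (preT (xs T) t) (xs T t) := by
          intro t ht
          have hdt : (gramMat k (preT (xs T) t)).det ≠ 0 := hdet T hTpos t (le_of_lt ht)
          have ha : s ≤ postVar k (0 : Matrix (Fin t) (Fin t) ℝ) (preT (xs T) t) x :=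
            MVRAux.postVar_mono hker (xs T) (le_of_lt ht) hdt hdT x
          have hb : postVar k (0 : Matrix (Fin t) (Fin t) ℝ) (preT (xs T) t) x
              ≤ postVar k (0 : Matrix (Fin t) (Fin t) ℝ) (preT (xs T) t) (xs T t) := by
            have hstd := hMVR T hTpos t ht x
            have hnn1 : 0 ≤ postVar k (0 : Matrix (Fin t) (Fin t) ℝ) (preT (xs T) t) x :=
              MVRAux.postVar_zero_nonneg hker _ hdt x
            have hnn2 : 0 ≤ postVar k (0 : Matrix (Fin t) (Fin t) ℝ) (preT (xs T) t) (xs T t) :=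
              MVRAux.postVar_zero_nonneg hker _ hdt (xs T t)
            have := Real.sqrt_le_sqrt (le_refl (0:ℝ))
            calc postVar k (0 : Matrix (Fin t) (Fin t) ℝ) (preT (xs T) t) x
                = Real.sqrt (postVar k (0 : Matrix (Fin t) (Fin t) ℝ) (preT (xs T) t) x) ^ 2 := by
                  rw [Real.sq_sqrt hnn1]
              _ ≤ Real.sqrt (postVar k (0 : Matrix (Fin t) (Fin t) ℝ) (preT (xs T) t) (xs T t)) ^ 2 := by
                  have h0 : (0:ℝ) ≤ Real.sqrt (postVar k (0 : Matrix (Fin t) (Fin t) ℝ) (preT (xs T) t) x) :=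
                    Real.sqrt_nonneg _
                  exact pow_le_pow_left₀ h0 hstd 2
              _ = postVar k (0 : Matrix (Fin t) (Fin t) ℝ) (preT (xs T) t) (xs T t) := by
                  rw [Real.sq_sqrt hnn2]
          have hc : postVar k (0 : Matrix (Fin t) (Fin t) ℝ) (preT (xs T) t) (xs T t)
              ≤ postVar k ((l ^ 2) • (1 : Matrix (Fin t) (Fin t) ℝ)) (preT (xs T) t) (xs T t) :=
            MVRAux.postVar_zero_le_noisy hker _ hdt hlpos.ne' (xs T t)
          linarith
        -- step 2 : determinant lower bound
        have hchain := MVRAux.det_chain hker (xs T) hlpos.ne' T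
        have hdetlow : (2 * s) ^ T
            ≤ (gramMat k (preT (xs T) T) + (l ^ 2) • (1 : Matrix (Fin T) (Fin T) ℝ)).det := by
          rw [hchain]
          calc (2 * s) ^ T = ∏ _t ∈ Finset.range T, (2 * s) := by
                rw [Finset.prod_const, Finset.card_range]
            _ ≤ ∏ t ∈ Finset.range T,
                (l ^ 2 + postVar k ((l ^ 2) • (1 : Matrix (Fin t) (Fin t) ℝ)) (preT (xs T) t) (xs T t)) := by
                refine Finset.prod_le_prod (fun t _ => by positivity) (fun t htm => ?_)
                have := hstep t (Finset.mem_range.mp htm)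
                linarith [hl2]
        -- step 3 : info gain lower bound
        have hdetS : ((l ^ 2) • (1 : Matrix (Fin T) (Fin T) ℝ)).det = s ^ T := by
          rw [Matrix.det_smul, Matrix.det_one, hl2]
          simp
        have hIGlow : ((T:ℝ) / 2) * Real.log 2
            ≤ infoGain k ((l ^ 2) • (1 : Matrix (Fin T) (Fin T) ℝ)) (preT (xs T) T) := by
          rw [infoGain, hdetS]
          have hcomm : (l ^ 2) • (1 : Matrix (Fin T) (Fin T) ℝ) + gramMat k (preT (xs T) T)
              = gramMat k (preT (xs T) T) + (l ^ 2) • (1 : Matrix (Fin T) (Fin T) ℝ) := by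
            rw [add_comm]
          rw [hcomm]
          have hspow : (0:ℝ) < s ^ T := by positivity
          have hratio : (2:ℝ) ^ T
              ≤ (gramMat k (preT (xs T) T) + (l ^ 2) • (1 : Matrix (Fin T) (Fin T) ℝ)).det / s ^ T := by
            rw [le_div_iff₀ hspow]
            calc (2:ℝ) ^ T * s ^ T = (2 * s) ^ T := by rw [mul_pow]
              _ ≤ _ := hdetlow
          have hlog : (T:ℝ) * Real.log 2 ≤ Real.log
              ((gramMat k (preT (xs T) T) + (l ^ 2) • (1 : Matrix (Fin T) (Fin T) ℝ)).det / s ^ T) := by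
            calc (T:ℝ) * Real.log 2 = Real.log ((2:ℝ) ^ T) := by rw [Real.log_pow]
              _ ≤ _ := Real.log_le_log (by positivity) hratio
          linarith
        -- step 4 : info gain upper bound and core numeric
        have hIGup := hIG T hTpos l hlpos (preT (xs T) T)
        have hexp : 2 * ν / (2 * ν + (d:ℝ)) = 1 - (d : ℝ) / (2 * ν + (d:ℝ)) := by
          have hden : (0:ℝ) < 2 * ν + d := by linarith
          field_simp
          ring
        have h6 := le_trans hIGlow hIGup
        rw [hexp, hl2] at h6
        have hhyp : (T : ℝ) * Real.log 2
            ≤ 2 * Cb * ((T : ℝ) / s) ^ ((d : ℝ) / (2 * ν + (d : ℝ)))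
              * (Real.log (1 + (T : ℝ) / s)) ^ (1 - (d : ℝ) / (2 * ν + (d : ℝ))) := by
          linarith
        have hfinal := hcore T hT3 s hspos hhyp
        -- convert to standard deviation
        have hsq : C3 * (T:ℝ) ^ (-(2 * ν / (d:ℝ))) * (Real.log (T:ℝ)) ^ (2 * ν / (d:ℝ))
            = (Real.sqrt C3 * (T:ℝ) ^ (-(ν / (d:ℝ))) * (Real.log (T:ℝ)) ^ (ν / (d:ℝ))) ^ 2 := by
          have e5 : (T:ℝ) ^ (-(ν / (d:ℝ))) * (T:ℝ) ^ (-(ν / (d:ℝ))) = (T:ℝ) ^ (-(2 * ν / (d:ℝ))) := by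
            rw [← Real.rpow_add hTposR]
            congr 1
            ring
          have e6 : (Real.log (T:ℝ)) ^ (ν / (d:ℝ)) * (Real.log (T:ℝ)) ^ (ν / (d:ℝ))
              = (Real.log (T:ℝ)) ^ (2 * ν / (d:ℝ)) := by
            rw [← Real.rpow_add hlogTpos]
            congr 1
            ring
          have e7 : Real.sqrt C3 * Real.sqrt C3 = C3 := Real.mul_self_sqrt hC3pos.le
          calc C3 * (T:ℝ) ^ (-(2 * ν / (d:ℝ))) * (Real.log (T:ℝ)) ^ (2 * ν / (d:ℝ))
              = (Real.sqrt C3 * Real.sqrt C3)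
                * ((T:ℝ) ^ (-(ν / (d:ℝ))) * (T:ℝ) ^ (-(ν / (d:ℝ))))
                * ((Real.log (T:ℝ)) ^ (ν / (d:ℝ)) * (Real.log (T:ℝ)) ^ (ν / (d:ℝ))) := by
                rw [e5, e6, e7]
            _ = _ := by ring
        rw [hsq] at hfinal
        calc postStd k (0 : Matrix (Fin T) (Fin T) ℝ) X x = Real.sqrt s := rfl
          _ ≤ Real.sqrt ((Real.sqrt C3 * (T:ℝ) ^ (-(ν / (d:ℝ))) * (Real.log (T:ℝ)) ^ (ν / (d:ℝ))) ^ 2) :=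
              Real.sqrt_le_sqrt hfinal
          _ = Real.sqrt C3 * (T:ℝ) ^ (-(ν / (d:ℝ))) * (Real.log (T:ℝ)) ^ (ν / (d:ℝ)) := by
              rw [Real.sqrt_sq hRpos]
    -- combine
    have k1 := key xstar
    have k2 := key (xhat T)
    have hregret2 : f xstar - f (xhat T)
        ≤ 2 * Real.sqrt C3 * B * (T:ℝ) ^ (-(ν / (d:ℝ))) * (Real.log (T:ℝ)) ^ (ν / (d:ℝ)) := by
      nlinarith [hregret, k1, k2, hB.le]
    have hqexp : (Real.log (T:ℝ)) ^ (ν / (d:ℝ)) ≤ (Real.log (T:ℝ)) ^ q := by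
      apply Real.rpow_le_rpow_of_exponent_le hlogT
      rw [hqdef]
      have h8 : ν ≤ ν * (1 + α) := by nlinarith
      gcongr
    have hC'1 : 2 * Real.sqrt C3 ≤ C' := le_max_left _ _
    have hfin : 2 * Real.sqrt C3 * B * (T:ℝ) ^ (-(ν / (d:ℝ))) * (Real.log (T:ℝ)) ^ (ν / (d:ℝ))
        ≤ C' * B * (T:ℝ) ^ (-(ν / (d:ℝ))) * (Real.log (T:ℝ)) ^ q := by
      have hx : (0:ℝ) < (T:ℝ) ^ (-(ν / (d:ℝ))) := Real.rpow_pos_of_pos hTposR _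
      have hy : (0:ℝ) ≤ (Real.log (T:ℝ)) ^ (ν / (d:ℝ)) := by positivity
      have hsqrtpos : (0:ℝ) < 2 * Real.sqrt C3 := by positivity
      have step1 : 2 * Real.sqrt C3 * B * (T:ℝ) ^ (-(ν / (d:ℝ)))
          ≤ C' * B * (T:ℝ) ^ (-(ν / (d:ℝ))) :=
        mul_le_mul_of_nonneg_right (mul_le_mul_of_nonneg_right hC'1 hB.le) hx.le
      have hC'pos : 0 < C' := lt_of_lt_of_le hsqrtpos hC'1
      have hCBX : (0:ℝ) ≤ C' * B * (T:ℝ) ^ (-(ν / (d:ℝ))) := by positivity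
      calc 2 * Real.sqrt C3 * B * (T:ℝ) ^ (-(ν / (d:ℝ))) * (Real.log (T:ℝ)) ^ (ν / (d:ℝ))
          ≤ C' * B * (T:ℝ) ^ (-(ν / (d:ℝ))) * (Real.log (T:ℝ)) ^ (ν / (d:ℝ)) :=
            mul_le_mul_of_nonneg_right step1 hy
        _ ≤ C' * B * (T:ℝ) ^ (-(ν / (d:ℝ))) * (Real.log (T:ℝ)) ^ q :=
            mul_le_mul_of_nonneg_left hqexp hCBX
    linarith
end
end

section
/- (Simple regret of variance-aware MVR under a valid confidence bound.) Fix T ∈ ℕ+ and ρ_1,…,ρ_T ≥ 0 with V := Σ_{t=1}^T ρ_t² > 0; set Σ_t := diag(ρ_1²,…,ρ_t²) and assume K(X_t,X_t)+Σ_t is invertible for every t ≤ T. Set λ̃_t² := max{ρ_t², V/T} and Σ̃_T := diag(λ̃_1²,…,λ̃_T²). Let x_1,…,x_T ∈ 𝒳 be chosen by maximum variance reduction: for every t ∈ [T] and x ∈ 𝒳, σ_{Σ_{t−1}}(x; X_{t−1}) ≤ σ_{Σ_{t−1}}(x_t; X_{t−1}). Suppose γ ≥ 0 satisfies I_{Σ̃_T}(Z)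 ≤ γ for every T-tuple Z of points of 𝒳, and T/2 ≥ 4γ. Let β^{1/2} ≥ 0, y ∈ ℝ^T, and f : 𝒳 → ℝ satisfy |f(x) − μ_{Σ_T}(x; X_T, y)| ≤ β^{1/2}·σ_{Σ_T}(x; X_T) for all x ∈ 𝒳, and let x̂ ∈ 𝒳 satisfy μ_{Σ_T}(x; X_T, y) ≤ μ_{Σ_T}(x̂; X_T, y) for all x ∈ 𝒳. Then for every x* ∈ 𝒳: f(x*) − f(x̂) ≤ (8·β^{1/2}/T)·√(2·V·γ). -/
open Matrix Real Finset

noncomputable section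

universe u

section Aux

variable {𝒳 : Type u}

/-- Quadratic lower bound: the posterior-variance bilinear term is the minimum of a quadratic. -/
lemma quad_ge {m : ℕ} (M : Matrix (Fin m) (Fin m) ℝ) (hM : M.PosSemidef)
    (hdet : M.det ≠ 0) (v w : Fin m → ℝ) (c : ℝ) :
    c - v ⬝ᵥ (M⁻¹ *ᵥ v) ≤ c - 2 * (w ⬝ᵥ v) + w ⬝ᵥ (M *ᵥ w) := by
  have hunit : IsUnit M.det := isUnit_iff_ne_zero.mpr hdet
  set u : Fin m → ℝ := M⁻¹ *ᵥ v with hu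
  have hMu : M *ᵥ u = v := by
    rw [hu, Matrix.mulVec_mulVec, Matrix.mul_nonsing_inv M hunit, Matrix.one_mulVec]
  have hsymm : Mᵀ = M := hM.1
  have key : (w - u) ⬝ᵥ (M *ᵥ (w - u)) = w ⬝ᵥ (M *ᵥ w) - 2 * (w ⬝ᵥ v) + v ⬝ᵥ u := by
    have huMw : u ⬝ᵥ (M *ᵥ w) = w ⬝ᵥ v := by
      rw [Matrix.dotProduct_mulVec, ← Matrix.mulVec_transpose, hsymm, hMu,
        dotProduct_comm]
    have huv : u ⬝ᵥ v = v ⬝ᵥ u := dotProduct_comm _ _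
    rw [Matrix.mulVec_sub, sub_dotProduct, dotProduct_sub,
      dotProduct_sub, hMu, huMw, huv]
    ring
  have h0 : 0 ≤ (w - u) ⬝ᵥ (M *ᵥ (w - u)) := by
    have := hM.dotProduct_mulVec_nonneg (w - u)
    simpa using this
  rw [key] at h0
  linarith

end Aux
section Aux2
variable {𝒳 : Type u}

lemma quad_eq {m : ℕ} (M : Matrix (Fin m) (Fin m) ℝ)
    (hdet : M.det ≠ 0) (v : Fin m → ℝ) (c : ℝ) :
    c - v ⬝ᵥ (M⁻¹ *ᵥ v)
      = c - 2 * ((M⁻¹ *ᵥ v) ⬝ᵥ v) + (M⁻¹ *ᵥ v) ⬝ᵥ (M *ᵥ (M⁻¹ *ᵥ v)) := by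
  have hunit : IsUnit M.det := isUnit_iff_ne_zero.mpr hdet
  have hMu : M *ᵥ (M⁻¹ *ᵥ v) = v := by
    rw [Matrix.mulVec_mulVec, Matrix.mul_nonsing_inv M hunit, Matrix.one_mulVec]
  rw [hMu]
  have : (M⁻¹ *ᵥ v) ⬝ᵥ v = v ⬝ᵥ (M⁻¹ *ᵥ v) := dotProduct_comm _ _
  rw [this]; ring

/-- The kernel quadratic form is nonnegative. -/
lemma kernel_quad_nonneg (k : 𝒳 → 𝒳 → ℝ) (hk : IsKernel k) {m : ℕ}
    (X : Fin m → 𝒳) (x : 𝒳) (w : Fin m → ℝ) :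
    0 ≤ k x x - 2 * (w ⬝ᵥ kVec k X x) + w ⬝ᵥ (gramMat k X *ᵥ w) := by
  set X' : Fin (m + 1) → 𝒳 := Fin.snoc X x with hX'
  set u : Fin (m + 1) → ℝ := Fin.snoc (fun i => -(w i)) 1 with hu'
  have hpsd := (hk.2 (m + 1) X').dotProduct_mulVec_nonneg u
  rw [star_trivial] at hpsd
  have h1 : ∀ i : Fin m, k (X i) x = k x (X i) := fun i => hk.1 _ _
  have hexp : u ⬝ᵥ (gramMat k X' *ᵥ u)
      = k x x - 2 * (w ⬝ᵥ kVec k X x) + w ⬝ᵥ (gramMat k X *ᵥ w) := by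
    simp only [dotProduct, Matrix.mulVec, gramMat, kVec, Matrix.of_apply,
      Fin.sum_univ_castSucc, hu', hX', Fin.snoc_castSucc, Fin.snoc_last]
    have key : ∀ i : Fin m,
        (-(w i)) * ((∑ j : Fin m, k (X i) (X j) * (-(w j))) + k (X i) x * 1)
          = w i * (∑ j : Fin m, k (X i) (X j) * w j) - w i * k x (X i) := by
      intro i
      rw [h1 i]
      have : (∑ j : Fin m, k (X i) (X j) * (-(w j)))
          = -∑ j : Fin m, k (X i) (X j) * w j := by
        rw [← Finset.sum_neg_distrib]; apply Finset.sum_congr rfl; intros; ring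
      rw [this]; ring
    rw [Finset.sum_congr rfl (fun i _ => key i), Finset.sum_sub_distrib]
    have : (∑ j : Fin m, k x (X j) * (-(w j))) = -∑ j : Fin m, w j * k x (X j) := by
      rw [← Finset.sum_neg_distrib]; apply Finset.sum_congr rfl; intros; ring
    rw [this]
    have : (∑ i : Fin m, w i * k x (X i)) = ∑ j : Fin m, w j * k x (X j) := rfl
    rw [Finset.mul_sum]
    ring_nf
    have h2 : (∑ j : Fin m, 2 * w j * k x (X j)) = (∑ j : Fin m, w j * k x (X j)) * 2 := by
      rw [Finset.sum_mul]; apply Finset.sum_congr rfl; intros; ring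
    rw [← Finset.sum_mul]; ring
  rw [hexp] at hpsd
  exact hpsd

end Aux2
section Aux3
variable {𝒳 : Type u}

/-- Sum over `Fin T` of a function supported on indices `< t`. -/
lemma sum_ext_prefix {t T : ℕ} (h : t ≤ T) (g : Fin T → ℝ)
    (hg : ∀ i : Fin T, ¬ i.val < t → g i = 0) :
    ∑ i, g i = ∑ i : Fin t, g (Fin.castLE h i) := by
  set G : ℕ → ℝ := fun n => if hn : n < T then g ⟨n, hn⟩ else 0 with hG
  have h1 : ∑ i : Fin T, g i = ∑ n ∈ Finset.range T, G n := by
    rw [← Fin.sum_univ_eq_sum_range]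
    apply Finset.sum_congr rfl
    intro i _
    simp [hG, i.isLt]
  have h2 : ∑ i : Fin t, g (Fin.castLE h i) = ∑ n ∈ Finset.range t, G n := by
    rw [← Fin.sum_univ_eq_sum_range]
    apply Finset.sum_congr rfl
    intro i _
    have hi : (i : ℕ) < T := lt_of_lt_of_le i.isLt h
    simp only [hG, hi, dif_pos]
    rfl
  rw [h1, h2, Finset.range_eq_Ico,
    ← Finset.sum_Ico_consecutive _ (Nat.zero_le t) h]
  have h3 : ∑ n ∈ Finset.Ico t T, G n = 0 := by
    apply Finset.sum_eq_zero
    intro n hn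
    rw [Finset.mem_Ico] at hn
    simp only [hG, hn.2, dif_pos]
    exact hg _ (by simpa using Nat.not_lt.mpr hn.1)
  rw [h3, add_zero, Finset.range_eq_Ico]

end Aux3
section Aux4
variable {𝒳 : Type u}

/-- The quadratic objective whose minimum is the posterior variance. -/
def Qform (k : 𝒳 → 𝒳 → ℝ) {m : ℕ} (S : Matrix (Fin m) (Fin m) ℝ)
    (X : Fin m → 𝒳) (x : 𝒳) (w : Fin m → ℝ) : ℝ :=
  k x x - 2 * (w ⬝ᵥ kVec k X x) + w ⬝ᵥ ((gramMat k X + S) *ᵥ w)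

lemma postVar_le_Qform (k : 𝒳 → 𝒳 → ℝ) {m : ℕ} {S : Matrix (Fin m) (Fin m) ℝ}
    {X : Fin m → 𝒳} (hpsd : (gramMat k X + S).PosSemidef)
    (hdet : (gramMat k X + S).det ≠ 0) (x : 𝒳) (w : Fin m → ℝ) :
    postVar k S X x ≤ Qform k S X x w :=
  quad_ge _ hpsd hdet _ w _

lemma postVar_eq_Qform (k : 𝒳 → 𝒳 → ℝ) {m : ℕ} {S : Matrix (Fin m) (Fin m) ℝ}
    {X : Fin m → 𝒳} (hdet : (gramMat k X + S).det ≠ 0) (x : 𝒳) :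
    postVar k S X x
      = Qform k S X x ((gramMat k X + S)⁻¹ *ᵥ kVec k X x) :=
  quad_eq _ hdet _ _

lemma Qform_nonneg (k : 𝒳 → 𝒳 → ℝ) (hk : IsKernel k) {m : ℕ}
    {S : Matrix (Fin m) (Fin m) ℝ} (hS : S.PosSemidef)
    (X : Fin m → 𝒳) (x : 𝒳) (w : Fin m → ℝ) :
    0 ≤ Qform k S X x w := by
  have h1 := kernel_quad_nonneg k hk X x w
  have h2 : 0 ≤ w ⬝ᵥ (S *ᵥ w) := by simpa using hS.dotProduct_mulVec_nonneg w
  have : Qform k S X x w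
      = (k x x - 2 * (w ⬝ᵥ kVec k X x) + w ⬝ᵥ (gramMat k X *ᵥ w)) + w ⬝ᵥ (S *ᵥ w) := by
    unfold Qform
    rw [Matrix.add_mulVec, dotProduct_add]
    ring
  rw [this]
  linarith

lemma postVar_nonneg_s18 (k : 𝒳 → 𝒳 → ℝ) (hk : IsKernel k) {m : ℕ}
    {S : Matrix (Fin m) (Fin m) ℝ} (hS : S.PosSemidef)
    {X : Fin m → 𝒳} (hdet : (gramMat k X + S).det ≠ 0) (x : 𝒳) :
    0 ≤ postVar k S X x := by
  rw [postVar_eq_Qform k hdet x]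
  exact Qform_nonneg k hk hS X x _

/-- Monotonicity of posterior variance in the (diagonal) noise. -/
lemma postVar_mono_noise_s18 (k : 𝒳 → 𝒳 → ℝ) (hk : IsKernel k) {m : ℕ}
    {d d' : Fin m → ℝ} (hd : ∀ i, 0 ≤ d i) (hdd' : ∀ i, d i ≤ d' i)
    {X : Fin m → 𝒳}
    (hdet : (gramMat k X + Matrix.diagonal d).det ≠ 0)
    (hdet' : (gramMat k X + Matrix.diagonal d').det ≠ 0) (x : 𝒳) :
    postVar k (Matrix.diagonal d) X x ≤ postVar k (Matrix.diagonal d') X x := by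
  have hpsd : (gramMat k X + Matrix.diagonal d).PosSemidef :=
    (hk.2 m X).add (Matrix.PosSemidef.diagonal hd)
  set w := (gramMat k X + Matrix.diagonal d')⁻¹ *ᵥ kVec k X x with hw
  calc postVar k (Matrix.diagonal d) X x ≤ Qform k (Matrix.diagonal d) X x w :=
        postVar_le_Qform k hpsd hdet x w
    _ ≤ Qform k (Matrix.diagonal d') X x w := by
        unfold Qform
        have : ∀ (e : Fin m → ℝ), w ⬝ᵥ ((gramMat k X + Matrix.diagonal e) *ᵥ w)
            = w ⬝ᵥ (gramMat k X *ᵥ w) + ∑ i, e i * w i ^ 2 := by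
          intro e
          rw [Matrix.add_mulVec, dotProduct_add]
          congr 1
          simp [dotProduct, Matrix.mulVec_diagonal]
          apply Finset.sum_congr rfl; intros; ring
        rw [this d, this d']
        have : (∑ i, d i * w i ^ 2) ≤ ∑ i, d' i * w i ^ 2 := by
          apply Finset.sum_le_sum
          intro i _
          exact mul_le_mul_of_nonneg_right (hdd' i) (sq_nonneg _)
        linarith
    _ = postVar k (Matrix.diagonal d') X x := (postVar_eq_Qform k hdet' x).symm

end Aux4
section Aux5
variable {𝒳 : Type u}

/-- Monotonicity of posterior variance in data (prefix). -/
lemma postVar_prefix_le (k : 𝒳 → 𝒳 → ℝ) (hk : IsKernel k) (xs : ℕ → 𝒳)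
    (d : ℕ → ℝ) (hd : ∀ n, 0 ≤ d n) {t T : ℕ} (h : t ≤ T)
    (hdt : (gramMat k (preT xs t) + Matrix.diagonal (fun i : Fin t => d i.val)).det ≠ 0)
    (hdT : (gramMat k (preT xs T) + Matrix.diagonal (fun i : Fin T => d i.val)).det ≠ 0)
    (x : 𝒳) :
    postVar k (Matrix.diagonal fun i : Fin T => d i.val) (preT xs T) x
      ≤ postVar k (Matrix.diagonal fun i : Fin t => d i.val) (preT xs t) x := by
  set Dt : Matrix (Fin t) (Fin t) ℝ := Matrix.diagonal (fun i : Fin t => d i.val) with hDt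
  set DT : Matrix (Fin T) (Fin T) ℝ := Matrix.diagonal (fun i : Fin T => d i.val) with hDT
  set wt : Fin t → ℝ := (gramMat k (preT xs t) + Dt)⁻¹ *ᵥ kVec k (preT xs t) x with hwt
  set W : Fin T → ℝ := fun i => if hi : i.val < t then wt ⟨i.val, hi⟩ else 0 with hW
  have hWz : ∀ i : Fin T, ¬ i.val < t → W i = 0 := by
    intro i hi; simp [hW, hi]
  have hWc : ∀ i : Fin t, W (Fin.castLE h i) = wt i := by
    intro i; simp [hW, i.isLt]
  have hpsdT : (gramMat k (preT xs T) + DT).PosSemidef :=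
    (hk.2 T _).add (Matrix.PosSemidef.diagonal fun i => hd i.val)
  have step1 : postVar k DT (preT xs T) x ≤ Qform k DT (preT xs T) x W :=
    postVar_le_Qform k hpsdT hdT x W
  have ha : W ⬝ᵥ kVec k (preT xs T) x = wt ⬝ᵥ kVec k (preT xs t) x := by
    unfold dotProduct
    rw [sum_ext_prefix h _ (fun i hi => by rw [hWz i hi]; ring)]
    apply Finset.sum_congr rfl
    intro i _
    rw [hWc i]
    rfl
  have hentry : ∀ (i j : Fin t),
      (gramMat k (preT xs T) + DT) (Fin.castLE h i) (Fin.castLE h j)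
        = (gramMat k (preT xs t) + Dt) i j := by
    intro i j
    simp only [Matrix.add_apply, gramMat, Matrix.of_apply, preT, hDT, hDt,
      Matrix.diagonal_apply]
    congr 1
    by_cases hij : i = j
    · subst hij; simp
    · rw [if_neg hij, if_neg (by simpa [Fin.ext_iff] using (fun hc => hij (Fin.ext hc)) :
        ¬ Fin.castLE h i = Fin.castLE h j)]
  have hmv : ∀ i : Fin t,
      ((gramMat k (preT xs T) + DT) *ᵥ W) (Fin.castLE h i)
        = ((gramMat k (preT xs t) + Dt) *ᵥ wt) i := by
    intro i
    unfold Matrix.mulVec dotProduct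
    rw [sum_ext_prefix h _ (fun j hj => by rw [hWz j hj]; ring)]
    apply Finset.sum_congr rfl
    intro j _
    simp only [hWc, hentry]
  have hb : W ⬝ᵥ ((gramMat k (preT xs T) + DT) *ᵥ W)
      = wt ⬝ᵥ ((gramMat k (preT xs t) + Dt) *ᵥ wt) := by
    unfold dotProduct
    rw [sum_ext_prefix h _ (fun i hi => by rw [hWz i hi]; ring)]
    apply Finset.sum_congr rfl
    intro i _
    rw [hWc i, hmv i]
  have step2 : Qform k DT (preT xs T) x W = Qform k Dt (preT xs t) x wt := by
    unfold Qform
    rw [ha, hb]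
  have step3 : Qform k Dt (preT xs t) x wt = postVar k Dt (preT xs t) x :=
    (postVar_eq_Qform k hdt x).symm
  calc postVar k DT (preT xs T) x ≤ Qform k DT (preT xs T) x W := step1
    _ = Qform k Dt (preT xs t) x wt := step2
    _ = postVar k Dt (preT xs t) x := step3

end Aux5
section Aux6
variable {𝒳 : Type u}

lemma gram_diag_posDef (k : 𝒳 → 𝒳 → ℝ) (hk : IsKernel k) {n : ℕ}
    (X : Fin n → 𝒳) (lam : ℕ → ℝ) (hlam : ∀ i, 0 < lam i) :
    (gramMat k X + Matrix.diagonal (fun i : Fin n => lam i.val)).PosDef :=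
  Matrix.PosDef.posSemidef_add (hk.2 n X) (Matrix.posDef_diagonal_iff.mpr fun i => hlam i.val)

lemma det_succ (k : 𝒳 → 𝒳 → ℝ) (hk : IsKernel k) (xs : ℕ → 𝒳)
    (lam : ℕ → ℝ) (hlam : ∀ i, 0 < lam i) (n : ℕ) :
    (gramMat k (preT xs (n+1)) + Matrix.diagonal (fun i : Fin (n+1) => lam i.val)).det
      = (gramMat k (preT xs n) + Matrix.diagonal (fun i : Fin n => lam i.val)).det
        * (lam n + postVar k (Matrix.diagonal (fun i : Fin n => lam i.val)) (preT xs n) (xs n)) := by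
  set A : Matrix (Fin n) (Fin n) ℝ :=
    gramMat k (preT xs n) + Matrix.diagonal (fun i : Fin n => lam i.val) with hA
  have hApd : A.PosDef := gram_diag_posDef k hk _ lam hlam
  have hAunit : IsUnit A.det := isUnit_iff_ne_zero.mpr hApd.det_pos.ne'
  have : Invertible A := A.invertibleOfIsUnitDet hAunit
  set B : Matrix (Fin n) (Fin 1) ℝ := Matrix.of fun i _ => k (xs i.val) (xs n) with hB
  set C : Matrix (Fin 1) (Fin n) ℝ := Matrix.of fun _ j => k (xs n) (xs j.val) with hC
  set D : Matrix (Fin 1) (Fin 1) ℝ := Matrix.of fun _ _ => lam n + k (xs n) (xs n) with hD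
  have hblock : (gramMat k (preT xs (n+1))
        + Matrix.diagonal (fun i : Fin (n+1) => lam i.val)).submatrix
        (finSumFinEquiv (m := n) (n := 1)) finSumFinEquiv
      = Matrix.fromBlocks A B C D := by
    ext i j
    cases i with
    | inl i =>
      cases j with
      | inl j =>
        simp only [Matrix.submatrix_apply, finSumFinEquiv_apply_left, Matrix.fromBlocks_apply₁₁,
          hA, Matrix.add_apply, gramMat, Matrix.of_apply, preT, Matrix.diagonal_apply]
        congr 1
        by_cases hij : i = j
        · subst hij; simp
        · rw [if_neg (fun hc => hij (Fin.ext (by simpa using congrArg Fin.val hc))), if_neg hij]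
      | inr j =>
        simp only [Matrix.submatrix_apply, finSumFinEquiv_apply_left, finSumFinEquiv_apply_right,
          Matrix.fromBlocks_apply₁₂, hB, Matrix.add_apply, gramMat, Matrix.of_apply, preT,
          Matrix.diagonal_apply]
        rw [if_neg (by simp [Fin.ext_iff]; omega), add_zero]
        congr 1
        simp [Fin.natAdd, Fin.val_eq_zero j]
    | inr i =>
      cases j with
      | inl j =>
        simp only [Matrix.submatrix_apply, finSumFinEquiv_apply_left, finSumFinEquiv_apply_right,
          Matrix.fromBlocks_apply₂₁, hC, Matrix.add_apply, gramMat, Matrix.of_apply, preT,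
          Matrix.diagonal_apply]
        rw [if_neg (by simp [Fin.ext_iff]; omega), add_zero]
        congr 1
        simp [Fin.natAdd, Fin.val_eq_zero i]
      | inr j =>
        have hi0 : i = 0 := Subsingleton.elim _ _
        have hj0 : j = 0 := Subsingleton.elim _ _
        subst hi0; subst hj0
        simp only [Matrix.submatrix_apply, finSumFinEquiv_apply_right,
          Matrix.fromBlocks_apply₂₂, hD, Matrix.add_apply, gramMat, Matrix.of_apply, preT,
          Matrix.diagonal_apply]
        simp [Fin.natAdd]
        ring
  have hdet1 : (gramMat k (preT xs (n+1))
        + Matrix.diagonal (fun i : Fin (n+1) => lam i.val)).det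
      = (Matrix.fromBlocks A B C D).det := by
    rw [← hblock, Matrix.det_submatrix_equiv_self]
  rw [hdet1, Matrix.det_fromBlocks₁₁]
  congr 1
  rw [Matrix.det_fin_one]
  have hInv : (⅟ A : Matrix (Fin n) (Fin n) ℝ) = A⁻¹ := (Matrix.invOf_eq_nonsing_inv A).symm ▸ rfl
  set v : Fin n → ℝ := kVec k (preT xs n) (xs n) with hv
  have hCB : (C * ⅟ A * B) 0 0 = v ⬝ᵥ (A⁻¹ *ᵥ v) := by
    rw [Matrix.invOf_eq_nonsing_inv]
    simp only [Matrix.mul_apply, dotProduct, Matrix.mulVec, Finset.sum_mul,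
      Finset.mul_sum, hB, hC, hv, kVec, Matrix.of_apply, preT, dotProduct]
    rw [Finset.sum_comm]
    apply Finset.sum_congr rfl
    intro i _
    apply Finset.sum_congr rfl
    intro j _
    rw [hk.1 (xs j.val) (xs n)]
    ring
  simp only [Matrix.sub_apply, hD, Matrix.of_apply, hCB]
  unfold postVar
  rw [← hv, ← hA]
  ring

end Aux6
section Aux7
variable {𝒳 : Type u}

lemma det_prefix_prod (k : 𝒳 → 𝒳 → ℝ) (hk : IsKernel k) (xs : ℕ → 𝒳)
    (lam : ℕ → ℝ) (hlam : ∀ i, 0 < lam i) (n : ℕ) :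
    (gramMat k (preT xs n) + Matrix.diagonal (fun i : Fin n => lam i.val)).det
      = ∏ i ∈ Finset.range n,
        (lam i + postVar k (Matrix.diagonal (fun j : Fin i => lam j.val)) (preT xs i) (xs i)) := by
  induction n with
  | zero => simp [Matrix.det_isEmpty]
  | succ n ih =>
    rw [det_succ k hk xs lam hlam n, ih, Finset.prod_range_succ]

lemma sum_log_le_two_gamma (k : 𝒳 → 𝒳 → ℝ) (hk : IsKernel k) (xs : ℕ → 𝒳)
    (lam : ℕ → ℝ) (hlam : ∀ i, 0 < lam i) (T : ℕ) (γ : ℝ)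
    (hγ : infoGain k (Matrix.diagonal fun i : Fin T => lam i.val) (preT xs T) ≤ γ) :
    ∑ i ∈ Finset.range T, Real.log
      (1 + postVar k (Matrix.diagonal (fun j : Fin i => lam j.val)) (preT xs i) (xs i) / lam i)
      ≤ 2 * γ := by
  set pv : ℕ → ℝ := fun i =>
    postVar k (Matrix.diagonal (fun j : Fin i => lam j.val)) (preT xs i) (xs i) with hpv
  have hpv0 : ∀ i, 0 ≤ pv i := by
    intro i
    exact postVar_nonneg_s18 k hk (Matrix.PosSemidef.diagonal fun j => (hlam j.val).le)
      (gram_diag_posDef k hk (preT xs i) lam hlam).det_pos.ne' (xs i)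
  have hIG : infoGain k (Matrix.diagonal fun i : Fin T => lam i.val) (preT xs T)
      = (1/2) * ∑ i ∈ Finset.range T, Real.log (1 + pv i / lam i) := by
    unfold infoGain
    congr 1
    rw [add_comm, det_prefix_prod k hk xs lam hlam T, Matrix.det_diagonal,
      Fin.prod_univ_eq_prod_range (fun i => lam i) T, ← Finset.prod_div_distrib]
    rw [Real.log_prod]
    · apply Finset.sum_congr rfl
      intro i _
      rw [add_div, div_self (hlam i).ne']
    · intro i hi
      have h1 : 0 < lam i + pv i := by have := hpv0 i; have := hlam i; linarith
      exact (div_pos h1 (hlam i)).ne'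
  have : (0:ℝ) ≤ ∑ i ∈ Finset.range T, Real.log (1 + pv i / lam i) := by
    apply Finset.sum_nonneg
    intro i _
    apply Real.log_nonneg
    have := hpv0 i; have := hlam i
    have : 0 ≤ pv i / lam i := div_nonneg (hpv0 i) (hlam i).le
    linarith
  rw [hIG] at hγ
  linarith

end Aux7
lemma self_le_two_log {s : ℝ} (h0 : 0 ≤ s) (h1 : s ≤ 1) : s ≤ 2 * Real.log (1 + s) := by
  have hpos : (0:ℝ) < 1 + s := by linarith
  have hlog : 1 - (1 + s)⁻¹ ≤ Real.log (1 + s) := Real.one_sub_inv_le_log_of_pos hpos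
  have hinv : (1 + s)⁻¹ ≤ 1 - s / 2 := by
    rw [inv_le_iff_one_le_mul₀ hpos]
    nlinarith
  linarith


/-- simple regret of variance-aware MVR under a valid confidence
bound. -/
theorem va_mvr_simple_regret
    {𝒳 : Type u} (k : 𝒳 → 𝒳 → ℝ) (hk : IsKernel k)
    (T : ℕ) (hT : 0 < T)
    (ρ : ℕ → ℝ) (hρ : ∀ t < T, 0 ≤ ρ t)
    (hV : 0 < ∑ t ∈ Finset.range T, ρ t ^ 2)
    (xs : ℕ → 𝒳)
    (hinv : ∀ t ≤ T,
      (gramMat k (preT xs t) + Matrix.diagonal (fun i : Fin t => ρ i.val ^ 2)).det ≠ 0)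
    (hMVR : ∀ t < T, ∀ x : 𝒳,
      postStd k (Matrix.diagonal fun i : Fin t => ρ i.val ^ 2) (preT xs t) x
        ≤ postStd k (Matrix.diagonal fun i : Fin t => ρ i.val ^ 2) (preT xs t) (xs t))
    (γ : ℝ) (hγ0 : 0 ≤ γ)
    (hγ : ∀ Z : Fin T → 𝒳,
      infoGain k (Matrix.diagonal fun i : Fin T =>
        max (ρ i.val ^ 2) ((∑ t ∈ Finset.range T, ρ t ^ 2) / T)) Z ≤ γ)
    (hbig : (T : ℝ) / 2 ≥ 4 * γ)
    (sβ : ℝ) (hβ : 0 ≤ sβ) (y : Fin T → ℝ) (f : 𝒳 → ℝ)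
    (hconf : ∀ x : 𝒳,
      |f x - postMean k (Matrix.diagonal fun i : Fin T => ρ i.val ^ 2) (preT xs T) y x|
        ≤ sβ * postStd k (Matrix.diagonal fun i : Fin T => ρ i.val ^ 2) (preT xs T) x)
    (xhat : 𝒳)
    (hxhat : ∀ x : 𝒳,
      postMean k (Matrix.diagonal fun i : Fin T => ρ i.val ^ 2) (preT xs T) y x
        ≤ postMean k (Matrix.diagonal fun i : Fin T => ρ i.val ^ 2) (preT xs T) y xhat)
    (xstar : 𝒳) :
    f xstar - f xhat
      ≤ (8 * sβ / T) * Real.sqrt (2 * (∑ t ∈ Finset.range T, ρ t ^ 2) * γ) := by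
  set V : ℝ := ∑ t ∈ Finset.range T, ρ t ^ 2 with hVdef
  set lam : ℕ → ℝ := fun i => max (ρ i ^ 2) (V / T) with hlamdef
  have hTpos : (0:ℝ) < T := Nat.cast_pos.mpr hT
  have hlam : ∀ i, 0 < lam i := fun i =>
    lt_of_lt_of_le (div_pos hV hTpos) (le_max_right _ _)
  set pv : ℕ → ℝ := fun i =>
    postVar k (Matrix.diagonal (fun j : Fin i => lam j.val)) (preT xs i) (xs i) with hpvdef
  -- the sum of logs is at most 2γ
  have hsum : ∑ i ∈ Finset.range T, Real.log (1 + pv i / lam i) ≤ 2 * γ := by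
    apply sum_log_le_two_gamma k hk xs lam hlam T γ
    exact hγ (preT xs T)
  have hpv0 : ∀ i, 0 ≤ pv i := fun i =>
    postVar_nonneg_s18 k hk (Matrix.PosSemidef.diagonal fun j => (hlam j.val).le)
      (gram_diag_posDef k hk (preT xs i) lam hlam).det_pos.ne' (xs i)
  have hterm0 : ∀ i, 0 ≤ Real.log (1 + pv i / lam i) := by
    intro i
    apply Real.log_nonneg
    have := div_nonneg (hpv0 i) (hlam i).le
    linarith
  -- good and bad indices
  set G : Finset ℕ := (Finset.range T).filter (fun i => pv i ≤ lam i) with hGdef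
  set Bd : Finset ℕ := (Finset.range T).filter (fun i => ¬ pv i ≤ lam i) with hBdef
  have hcards : G.card + Bd.card = T := by
    rw [hGdef, hBdef, Finset.card_filter_add_card_filter_not, Finset.card_range]
  have hBdbound : (Bd.card : ℝ) * (1/2) ≤ 2 * γ := by
    have h1 : ∀ i ∈ Bd, (1:ℝ)/2 ≤ Real.log (1 + pv i / lam i) := by
      intro i hi
      have hmem : ¬ pv i ≤ lam i := (Finset.mem_filter.mp hi).2
      push_neg at hmem
      have hs1 : (1:ℝ) < pv i / lam i := (one_lt_div (hlam i)).mpr hmem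
      have h2 : Real.log 2 ≤ Real.log (1 + pv i / lam i) := by
        apply Real.log_le_log (by norm_num)
        linarith
      have := Real.log_two_gt_d9
      linarith
    calc (Bd.card : ℝ) * (1/2) = Bd.card • (1/2 : ℝ) := by
          rw [nsmul_eq_mul]
      _ ≤ ∑ i ∈ Bd, Real.log (1 + pv i / lam i) := Finset.card_nsmul_le_sum Bd _ _ h1
      _ ≤ ∑ i ∈ Finset.range T, Real.log (1 + pv i / lam i) := by
          apply Finset.sum_le_sum_of_subset_of_nonneg (Finset.filter_subset _ _)
          intro i _ _
          exact hterm0 i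
      _ ≤ 2 * γ := hsum
  have hGcard : (T:ℝ)/2 ≤ G.card := by
    have h1 : (G.card : ℝ) + Bd.card = T := by
      rw [← hcards]; push_cast; ring
    have h2 : (Bd.card : ℝ) ≤ 4 * γ := by linarith
    linarith
  -- sum of the ratios over good indices
  have hsumG : ∑ i ∈ G, pv i / lam i ≤ 4 * γ := by
    have h1 : ∀ i ∈ G, pv i / lam i ≤ 2 * Real.log (1 + pv i / lam i) := by
      intro i hi
      have hmem : pv i ≤ lam i := (Finset.mem_filter.mp hi).2
      apply self_le_two_log (div_nonneg (hpv0 i) (hlam i).le)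
      rw [div_le_one (hlam i)]
      exact hmem
    calc ∑ i ∈ G, pv i / lam i ≤ ∑ i ∈ G, 2 * Real.log (1 + pv i / lam i) :=
          Finset.sum_le_sum h1
      _ = 2 * ∑ i ∈ G, Real.log (1 + pv i / lam i) := by rw [Finset.mul_sum]
      _ ≤ 2 * ∑ i ∈ Finset.range T, Real.log (1 + pv i / lam i) := by
          apply mul_le_mul_of_nonneg_left _ (by norm_num)
          apply Finset.sum_le_sum_of_subset_of_nonneg (Finset.filter_subset _ _)
          intro i _ _
          exact hterm0 i
      _ ≤ 2 * (2 * γ) := by linarith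
      _ = 4 * γ := by ring
  have hsumlam : ∑ i ∈ G, lam i ≤ 2 * V := by
    calc ∑ i ∈ G, lam i ≤ ∑ i ∈ Finset.range T, lam i := by
          apply Finset.sum_le_sum_of_subset_of_nonneg (Finset.filter_subset _ _)
          intro i _ _
          exact (hlam i).le
      _ ≤ ∑ i ∈ Finset.range T, (ρ i ^ 2 + V / T) := by
          apply Finset.sum_le_sum
          intro i _
          exact max_le (le_add_of_nonneg_right (div_pos hV hTpos).le)
            (le_add_of_nonneg_left (sq_nonneg _))
      _ = V + T * (V / T) := by
          rw [Finset.sum_add_distrib, Finset.sum_const, Finset.card_range, nsmul_eq_mul]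
      _ = 2 * V := by field_simp; ring
  -- pointwise bound on the final posterior std
  have hstd : ∀ (x : 𝒳), ∀ i ∈ G,
      postStd k (Matrix.diagonal fun j : Fin T => ρ j.val ^ 2) (preT xs T) x
        ≤ Real.sqrt (pv i) := by
    intro x i hi
    have hiT : i < T := Finset.mem_range.mp (Finset.mem_filter.mp hi).1
    have h1 : postVar k (Matrix.diagonal fun j : Fin T => ρ j.val ^ 2) (preT xs T) x
        ≤ postVar k (Matrix.diagonal fun j : Fin i => ρ j.val ^ 2) (preT xs i) x :=
      postVar_prefix_le k hk xs (fun n => ρ n ^ 2) (fun n => sq_nonneg _) hiT.le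
        (hinv i hiT.le) (hinv T le_rfl) x
    have hvar0 : 0 ≤ postVar k (Matrix.diagonal fun j : Fin i => ρ j.val ^ 2) (preT xs i) x :=
      postVar_nonneg_s18 k hk (Matrix.PosSemidef.diagonal fun j => sq_nonneg _)
        (hinv i hiT.le) x
    have h2 : postVar k (Matrix.diagonal fun j : Fin i => ρ j.val ^ 2) (preT xs i) x
        ≤ postVar k (Matrix.diagonal fun j : Fin i => ρ j.val ^ 2) (preT xs i) (xs i) := by
      have hmvr := hMVR i hiT x
      unfold postStd at hmvr
      have := pow_le_pow_left₀ (Real.sqrt_nonneg _) hmvr 2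
      rw [Real.sq_sqrt hvar0, Real.sq_sqrt (postVar_nonneg_s18 k hk
        (Matrix.PosSemidef.diagonal fun j => sq_nonneg _) (hinv i hiT.le) (xs i))] at this
      exact this
    have h3 : postVar k (Matrix.diagonal fun j : Fin i => ρ j.val ^ 2) (preT xs i) (xs i)
        ≤ pv i :=
      postVar_mono_noise_s18 k hk (fun j => sq_nonneg _) (fun j => le_max_left _ _)
        (hinv i hiT.le) (gram_diag_posDef k hk (preT xs i) lam hlam).det_pos.ne' (xs i)
    unfold postStd
    exact Real.sqrt_le_sqrt (by linarith)
  -- Cauchy-Schwarz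
  have hCS : (∑ i ∈ G, Real.sqrt (pv i)) ^ 2 ≤ (∑ i ∈ G, lam i) * ∑ i ∈ G, pv i / lam i := by
    apply Finset.sum_sq_le_sum_mul_sum_of_sq_eq_mul G
      (fun i _ => (hlam i).le) (fun i _ => div_nonneg (hpv0 i) (hlam i).le)
    intro i _
    rw [Real.sq_sqrt (hpv0 i)]
    field_simp
    rw [mul_div_cancel_right₀ _ (hlam i).ne']
  have hSG : ∑ i ∈ G, Real.sqrt (pv i) ≤ 2 * Real.sqrt (2 * V * γ) := by
    have h1 : (∑ i ∈ G, Real.sqrt (pv i)) ^ 2 ≤ 2 * V * (4 * γ) := by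
      refine hCS.trans ?_
      apply mul_le_mul hsumlam hsumG (Finset.sum_nonneg fun i _ =>
        div_nonneg (hpv0 i) (hlam i).le) (by linarith)
    have h2 : (0:ℝ) ≤ ∑ i ∈ G, Real.sqrt (pv i) :=
      Finset.sum_nonneg fun i _ => Real.sqrt_nonneg _
    have h3 : ∑ i ∈ G, Real.sqrt (pv i) ≤ Real.sqrt (2 * V * (4 * γ)) := by
      rw [Real.le_sqrt h2 (by positivity)]
      exact h1
    refine h3.trans_eq ?_
    rw [show 2 * V * (4 * γ) = 2^2 * (2 * V * γ) by ring, Real.sqrt_mul (by norm_num),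
      Real.sqrt_sq (by norm_num)]
  -- bound each posterior std
  have hGpos : (0:ℝ) < G.card := lt_of_lt_of_le (by positivity) hGcard
  have hstdbound : ∀ x : 𝒳,
      postStd k (Matrix.diagonal fun j : Fin T => ρ j.val ^ 2) (preT xs T) x
        ≤ 4 / T * Real.sqrt (2 * V * γ) := by
    intro x
    set σx := postStd k (Matrix.diagonal fun j : Fin T => ρ j.val ^ 2) (preT xs T) x with hσ
    have hσ0 : 0 ≤ σx := Real.sqrt_nonneg _
    have h1 : (G.card : ℝ) * σx ≤ ∑ i ∈ G, Real.sqrt (pv i) := by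
      calc (G.card : ℝ) * σx = G.card • σx := by rw [nsmul_eq_mul]
        _ ≤ ∑ i ∈ G, Real.sqrt (pv i) := Finset.card_nsmul_le_sum G _ _ (hstd x)
    have h2 : (T:ℝ)/2 * σx ≤ (G.card : ℝ) * σx := mul_le_mul_of_nonneg_right hGcard hσ0
    have h3 : (T:ℝ)/2 * σx ≤ 2 * Real.sqrt (2 * V * γ) := by linarith
    have h4 : σx * T ≤ 4 * Real.sqrt (2 * V * γ) := by linarith
    calc σx = σx * T / T := by field_simp
      _ ≤ 4 * Real.sqrt (2 * V * γ) / T := by gcongr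
      _ = 4 / T * Real.sqrt (2 * V * γ) := by ring
  -- final regret chain
  have hc1 := abs_le.mp (hconf xstar)
  have hc2 := abs_le.mp (hconf xhat)
  have hmean := hxhat xstar
  have hb1 := hstdbound xstar
  have hb2 := hstdbound xhat
  have hsβσ1 := mul_le_mul_of_nonneg_left hb1 hβ
  have hsβσ2 := mul_le_mul_of_nonneg_left hb2 hβ
  have hfinal : f xstar - f xhat
      ≤ sβ * (4 / T * Real.sqrt (2 * V * γ)) + sβ * (4 / T * Real.sqrt (2 * V * γ)) := by
    linarith
  calc f xstar - f xhat
      ≤ sβ * (4 / T * Real.sqrt (2 * V * γ)) + sβ * (4 / T * Real.sqrt (2 * V * γ)) := hfinal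
    _ = (8 * sβ / T) * Real.sqrt (2 * V * γ) := by field_simp; ring
end
end
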